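/- arXiv:1811.06650 — 8 statements merged into one kernel-verified Lean document; each statement's English description precedes it below -/
import Mathlib

section
/- Let d ≥ 1, m > 2, κ > 0, let 𝔖 be a symmetric positive definite d×d real matrix, let s ∈ (0,∞)^d and x ∈ ℝ^d. Then the function θ ∈ ℝ^d ↦ x·θ − κ·((m−1)/m)·Σ_{j=1}^d |(𝔖(θ×s))_j|^{m/(m−1)} attains its maximum over ℝ^d, and the maximum value equals (1/(m κ^{m−1})) · Σ_{j=1}^d |(𝔖^{−1}(x/s))_j|^m. -/
lemma young_aux (m κ : ℝ) (hm : 2 < m) (hκ : 0 < κ) (z w : ℝ) :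
    z * w - κ * ((m - 1) / m) * |w| ^ (m / (m - 1)) ≤ |z| ^ m / (m * κ ^ (m - 1)) := by
  have hm0 : (0:ℝ) < m := by linarith
  have hm1 : (0:ℝ) < m - 1 := by linarith
  have hpq : ((m / (m - 1))).HolderConjugate m :=
    Real.holderConjugate_iff.mpr ⟨by rw [lt_div_iff₀ hm1]; linarith, by field_simp; ring⟩
  have hκp : (0:ℝ) < κ ^ ((m - 1) / m) := Real.rpow_pos_of_pos hκ _
  have hy := Real.young_inequality_of_nonneg
      (mul_nonneg hκp.le (abs_nonneg w))
      (div_nonneg (abs_nonneg z) hκp.le) hpq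
  have hab : κ ^ ((m - 1) / m) * |w| * (|z| / κ ^ ((m - 1) / m)) = |z| * |w| := by
    field_simp
  rw [hab] at hy
  have e1 : (κ ^ ((m - 1) / m) * |w|) ^ (m / (m - 1)) = κ * |w| ^ (m / (m - 1)) := by
    rw [Real.mul_rpow hκp.le (abs_nonneg w), ← Real.rpow_mul hκ.le]
    have : (m - 1) / m * (m / (m - 1)) = 1 := by field_simp
    rw [this, Real.rpow_one]
  have e2 : (|z| / κ ^ ((m - 1) / m)) ^ m = |z| ^ m / κ ^ (m - 1) := by
    rw [Real.div_rpow (abs_nonneg z) hκp.le, ← Real.rpow_mul hκ.le]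
    have : (m - 1) / m * m = m - 1 := by field_simp
    rw [this]
  rw [e1, e2] at hy
  have hzw : z * w ≤ |z| * |w| := (le_abs_self _).trans (by rw [abs_mul])
  have := hzw.trans hy
  have hκm : (0:ℝ) < κ ^ (m - 1) := Real.rpow_pos_of_pos hκ _
  have hrw : κ * |w| ^ (m / (m - 1)) / (m / (m - 1)) = κ * ((m - 1) / m) * |w| ^ (m / (m - 1)) := by
    field_simp
  have hrw2 : |z| ^ m / κ ^ (m - 1) / m = |z| ^ m / (m * κ ^ (m - 1)) := by
    rw [div_div, mul_comm]
  rw [hrw, hrw2] at this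
  linarith

lemma eq_aux (m κ : ℝ) (hm : 2 < m) (hκ : 0 < κ) (z : ℝ) :
    z * (Real.sign z * (|z| ^ (m - 1) / κ ^ (m - 1)))
      - κ * ((m - 1) / m) * |Real.sign z * (|z| ^ (m - 1) / κ ^ (m - 1))| ^ (m / (m - 1))
      = |z| ^ m / (m * κ ^ (m - 1)) := by
  have hm0 : (0:ℝ) < m := by linarith
  have hm1 : (0:ℝ) < m - 1 := by linarith
  have hκm : (0:ℝ) < κ ^ (m - 1) := Real.rpow_pos_of_pos hκ _
  rcases eq_or_ne z 0 with hz | hz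
  · simp [hz, Real.zero_rpow (by positivity : m / (m-1) ≠ 0), Real.zero_rpow hm0.ne',
      Real.sign_zero]
  · have hza : (0:ℝ) < |z| := abs_pos.2 hz
    have hsz : z * Real.sign z = |z| := by
      rcases hz.lt_or_gt with h | h
      · rw [Real.sign_of_neg h, abs_of_neg h]; ring
      · rw [Real.sign_of_pos h, abs_of_pos h]; ring
    have habs : |Real.sign z * (|z| ^ (m - 1) / κ ^ (m - 1))| = |z| ^ (m - 1) / κ ^ (m - 1) := by
      rw [abs_mul, abs_of_nonneg (by positivity : (0:ℝ) ≤ |z| ^ (m-1) / κ ^ (m-1))]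
      rcases hz.lt_or_gt with h | h
      · rw [Real.sign_of_neg h]; simp
      · rw [Real.sign_of_pos h]
        simp
    rw [habs]
    have e1 : (|z| ^ (m - 1) / κ ^ (m - 1)) ^ (m / (m - 1)) = |z| ^ m / κ ^ m := by
      rw [Real.div_rpow (by positivity) hκm.le, ← Real.rpow_mul (abs_nonneg z),
        ← Real.rpow_mul hκ.le]
      have : (m - 1) * (m / (m - 1)) = m := by field_simp
      rw [this]
    rw [e1]
    have e2 : z * (Real.sign z * (|z| ^ (m - 1) / κ ^ (m - 1))) = |z| ^ m / κ ^ (m - 1) := by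
      rw [← mul_assoc, hsz]
      rw [mul_div_assoc']
      congr 1
      rw [show m = (m - 1) + 1 by ring, Real.rpow_add hza, Real.rpow_one]
      ring
    rw [e2]
    have eκ : κ ^ m = κ ^ (m - 1) * κ := by
      rw [show m = (m - 1) + 1 by ring, Real.rpow_add hκ, Real.rpow_one]
      ring_nf
    rw [eκ]
    field_simp
    ring

/-- The convex conjugate of the multiplicative price-impact trading cost:
the function `θ ↦ x·θ − κ((m−1)/m) Σ_j |(𝔖(θ×s))_j|^{m/(m−1)}` attains its maximum over `ℝ^d`,
and the maximum value equals `(1/(m κ^{m−1})) Σ_j |(𝔖⁻¹(x/s))_j|^m`. -/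
theorem stmt0 (d : ℕ) (hd : 1 ≤ d) (m κ : ℝ) (hm : 2 < m) (hκ : 0 < κ)
    (S : Matrix (Fin d) (Fin d) ℝ) (hS : S.PosDef)
    (s x : Fin d → ℝ) (hs : ∀ i, 0 < s i) :
    ∃ θ₀ : Fin d → ℝ,
      (∀ θ : Fin d → ℝ,
        (∑ i, x i * θ i) - κ * ((m - 1) / m) *
            (∑ j, |S.mulVec (fun i => θ i * s i) j| ^ (m / (m - 1))) ≤
          (∑ i, x i * θ₀ i) - κ * ((m - 1) / m) *
            (∑ j, |S.mulVec (fun i => θ₀ i * s i) j| ^ (m / (m - 1)))) ∧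
      (∑ i, x i * θ₀ i) - κ * ((m - 1) / m) *
          (∑ j, |S.mulVec (fun i => θ₀ i * s i) j| ^ (m / (m - 1))) =
        (1 / (m * κ ^ (m - 1))) * ∑ j, |S⁻¹.mulVec (fun i => x i / s i) j| ^ m := by
  have hdet : IsUnit S.det := isUnit_iff_ne_zero.2 (ne_of_gt hS.det_pos)
  set y : Fin d → ℝ := fun i => x i / s i with hy
  set z : Fin d → ℝ := S⁻¹.mulVec y with hz
  set w₀ : Fin d → ℝ := fun j => Real.sign (z j) * (|z j| ^ (m - 1) / κ ^ (m - 1)) with hw₀def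
  have hST : S.transpose = S := by
    rw [← Matrix.conjTranspose_eq_transpose_of_trivial, hS.isHermitian.eq]
  have hvm : Matrix.vecMul z S = S.mulVec z := by
    rw [← Matrix.mulVec_transpose S z, hST]
  have hSz : S.mulVec z = y := by
    rw [hz, Matrix.mulVec_mulVec, Matrix.mul_nonsing_inv S hdet, Matrix.one_mulVec]
  have huθ₀ : (fun i => (S⁻¹.mulVec w₀ i / s i) * s i) = S⁻¹.mulVec w₀ := by
    funext i
    exact div_mul_cancel₀ _ (hs i).ne'
  have hwθ₀ : S.mulVec (fun i => (S⁻¹.mulVec w₀ i / s i) * s i) = w₀ := by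
    rw [huθ₀, Matrix.mulVec_mulVec, Matrix.mul_nonsing_inv S hdet, Matrix.one_mulVec]
  have key : ∀ θ : Fin d → ℝ, (∑ i, x i * θ i)
      = ∑ j, z j * S.mulVec (fun i => θ i * s i) j := by
    intro θ
    have h1 : (∑ j, z j * S.mulVec (fun i => θ i * s i) j)
        = dotProduct z (S.mulVec (fun i => θ i * s i)) := rfl
    rw [h1, Matrix.dotProduct_mulVec, hvm, hSz]
    simp only [dotProduct, hy]
    refine Finset.sum_congr rfl fun i _ => ?_
    rw [div_mul_eq_mul_div, mul_div_assoc, mul_div_cancel_right₀ _ (hs i).ne']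
  have hval : ∀ θ : Fin d → ℝ,
      (∑ i, x i * θ i) - κ * ((m - 1) / m) *
          (∑ j, |S.mulVec (fun i => θ i * s i) j| ^ (m / (m - 1)))
      = ∑ j, (z j * S.mulVec (fun i => θ i * s i) j
          - κ * ((m - 1) / m) * |S.mulVec (fun i => θ i * s i) j| ^ (m / (m - 1))) := by
    intro θ
    rw [key θ, Finset.mul_sum, ← Finset.sum_sub_distrib]
  refine ⟨fun i => S⁻¹.mulVec w₀ i / s i, ?_, ?_⟩
  · intro θ
    rw [hval θ, hval]
    calc ∑ j, (z j * S.mulVec (fun i => θ i * s i) j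
          - κ * ((m - 1) / m) * |S.mulVec (fun i => θ i * s i) j| ^ (m / (m - 1)))
        ≤ ∑ j, |z j| ^ m / (m * κ ^ (m - 1)) :=
          Finset.sum_le_sum fun j _ => young_aux m κ hm hκ _ _
      _ = ∑ j, (z j * S.mulVec (fun i => ((S⁻¹.mulVec w₀ i / s i) * s i)) j
          - κ * ((m - 1) / m) *
            |S.mulVec (fun i => ((S⁻¹.mulVec w₀ i / s i) * s i)) j| ^ (m / (m - 1))) := by
          rw [hwθ₀]
          exact Finset.sum_congr rfl fun j _ => (eq_aux m κ hm hκ (z j)).symm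
  · rw [hval, hwθ₀, Finset.mul_sum]
    refine Finset.sum_congr rfl fun j _ => ?_
    rw [hw₀def, eq_aux m κ hm hκ (z j)]
    ring
end

section
/- Let m > 2 and λ_m ∈ ℝ. Suppose φ : ℝ → ℝ is convex, twice continuously differentiable, satisfies φ''(x) = −x² + λ_m + m^{−m}(m−1)^{m−1} |φ'(x)|^m for every x ∈ ℝ, and lim_{x→+∞} φ'(x)/x^{2/m} = m(m−1)^{1/m−1}, lim_{x→−∞} φ'(x)/|x|^{2/m} = −m(m−1)^{1/m−1}. Then φ'' is bounded on ℝ. -/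
open Filter Topology

lemma deriv_nonneg_of_monotone {p : ℝ → ℝ} (hp : Differentiable ℝ p) (hmono : Monotone p)
    (x : ℝ) : 0 ≤ deriv p x := by
  have h := hasDerivAt_iff_tendsto_slope.mp (hp x).hasDerivAt
  have h2 : Tendsto (slope p x) (𝓝[>] x) (𝓝 (deriv p x)) :=
    h.mono_left (nhdsWithin_mono x fun y hy => ne_of_gt hy)
  refine ge_of_tendsto h2 ?_
  filter_upwards [self_mem_nhdsWithin] with y hy
  have hxy : x < y := hy
  have hpp := hmono hxy.le
  rw [slope_def_field]
  exact div_nonneg (by linarith) (by linarith)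

lemma rpow_tangent {a b m : ℝ} (hb : 0 < b) (hba : b ≤ a) (hm : 1 ≤ m) :
    m * (a - b) * b ^ m ≤ (a ^ m - b ^ m) * b := by
  have hbm : (0:ℝ) < b ^ m := Real.rpow_pos_of_pos hb m
  have hs : (0:ℝ) ≤ (a - b) / b := div_nonneg (by linarith) hb.le
  have hB := one_add_mul_self_le_rpow_one_add (by linarith : (-1:ℝ) ≤ (a-b)/b) hm
  have h1 : 1 + (a - b) / b = a / b := by field_simp; ring
  rw [h1] at hB
  have h3 : a ^ m = b ^ m * (a / b) ^ m := by
    rw [← Real.mul_rpow hb.le (div_nonneg (hb.le.trans hba) hb.le), mul_div_cancel₀ _ hb.ne']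
  have h5 := mul_le_mul_of_nonneg_left hB (mul_pos hbm hb).le
  have lhs : (b ^ m * b) * (1 + m * ((a - b) / b)) = b ^ m * b + m * (a - b) * b ^ m := by
    field_simp
  have rhs : (b ^ m * b) * (a / b) ^ m = a ^ m * b := by rw [h3]; ring
  rw [lhs, rhs] at h5
  linarith

set_option maxHeartbeats 2000000 in
lemma onesided (m lam c K : ℝ) (hm : 2 < m) (hc : 0 < c) (hK : 0 ≤ K)
    (p : ℝ → ℝ) (hp : Differentiable ℝ p) (hmono : Monotone p)
    (hODE : ∀ x : ℝ, deriv p x = -x ^ 2 + lam + c * |p x| ^ m)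
    (R₀ : ℝ) (hR₀ : 1 ≤ R₀)
    (hup : ∀ x : ℝ, R₀ ≤ x → 0 ≤ p x ∧ p x ≤ K * x ^ (2/m)) :
    ∃ C R : ℝ, ∀ x : ℝ, R ≤ x → deriv p x ≤ C := by
  have hm0 : (0:ℝ) < m := by linarith
  have hm1 : (1:ℝ) ≤ m := by linarith
  have h2m : 2/m < 1 := by rw [div_lt_one hm0]; linarith
  have h2m0 : 0 < 2/m := by positivity
  set P := deriv p with hPdef
  have hP0 : ∀ x, 0 ≤ P x := deriv_nonneg_of_monotone hp hmono
  set R₁ : ℝ := max R₀ (2*|lam| + 2) with hR₁def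
  have hR₁0 : R₀ ≤ R₁ := le_max_left _ _
  have hR₁1 : (1:ℝ) ≤ R₁ := le_trans hR₀ hR₁0
  have hR₁lam : 2*|lam| ≤ R₁ := le_trans (by linarith [abs_nonneg lam]) (le_max_right _ _)
  have habs : ∀ x, R₁ ≤ x → |p x| = p x := fun x hx =>
    abs_of_nonneg ((hup x (le_trans hR₁0 hx)).1)
  have hlow : ∀ x, R₁ ≤ x → x^2/2 ≤ c * (p x) ^ m := by
    intro x hx
    have h1 : c * (p x) ^ m = P x + x^2 - lam := by
      have h := hODE x; rw [habs x hx] at h; linarith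
    have h2 := hP0 x
    have hx1 : (1:ℝ) ≤ x := le_trans hR₁1 hx
    have h3 : |lam| ≤ x/2 := by linarith [hR₁lam]
    have h4 : x ≤ x^2 := by nlinarith
    have h5 : lam ≤ x^2/2 := by
      have := le_abs_self lam; linarith
    linarith
  -- Master inequality
  have MI : ∀ x δ : ℝ, R₁ ≤ x → 0 < δ → δ ≤ 1 →
      P x ≤ (p (x+δ) - p x)/δ + (2*x+1)*δ := by
    intro x δ hx hδ0 hδ1
    have hx1 : (1:ℝ) ≤ x := le_trans hR₁1 hx
    set E : ℝ := (x+δ)^2 - x^2 with hE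
    have hmonoOn : MonotoneOn (fun y => p y - (P x - E) * y) (Set.Icc x (x+δ)) := by
      apply monotoneOn_of_deriv_nonneg (convex_Icc _ _)
      · exact (hp.continuous.sub (continuous_const.mul continuous_id)).continuousOn
      · intro y _
        exact ((hp y).sub ((differentiableAt_id.const_mul _))).differentiableWithinAt
      · intro y hy
        rw [interior_Icc] at hy
        have hD : HasDerivAt (fun y => p y - (P x - E) * y) (P y - (P x - E)) y := by
          have h1 := (hp y).hasDerivAt
          have h2 : HasDerivAt (fun y : ℝ => (P x - E) * y) (P x - E) y := by
            simpa using (hasDerivAt_id y).const_mul (P x - E)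
          exact h1.sub h2
        rw [hD.deriv]
        have hxy : x ≤ y := hy.1.le
        have hyx : y ≤ x + δ := hy.2.le
        have hpy : p x ≤ p y := hmono hxy
        have hpx0 : 0 ≤ p x := (hup x (le_trans hR₁0 hx)).1
        have hay : |p x| ^ m ≤ |p y| ^ m := by
          apply Real.rpow_le_rpow (abs_nonneg _) _ hm0.le
          rw [abs_of_nonneg hpx0, abs_of_nonneg (hpx0.trans hpy)]; exact hpy
        have hy2 : y^2 ≤ (x+δ)^2 := by nlinarith
        have hc' := mul_le_mul_of_nonneg_left hay hc.le
        have hOx := hODE x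
        have hOy := hODE y
        simp only [hE]
        linarith
    have hmem1 : x ∈ Set.Icc x (x+δ) := by constructor <;> linarith
    have hmem2 : x+δ ∈ Set.Icc x (x+δ) := by constructor <;> linarith
    have h6 := hmonoOn hmem1 hmem2 (by linarith)
    simp only at h6
    have h7 : (P x - E) * δ ≤ p (x+δ) - p x := by
      have := mul_add (P x - E) x δ
      linarith
    have hE2 : E ≤ (2*x+1)*δ := by
      simp only [hE]; nlinarith
    have h8 : P x - E ≤ (p (x+δ) - p x)/δ := (le_div_iff₀ hδ0).mpr h7
    linarith
  -- Bootstrap step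
  have step : ∀ β C : ℝ, 0 ≤ β → β ≤ 2 → 0 ≤ C →
      (∀ x, R₁ ≤ x → P x ≤ C * x ^ β) →
      ∃ C', 0 ≤ C' ∧ ∀ x, R₁ ≤ x → P x ≤ C' * x ^ ((β + 2/m - 1)/2) := by
    intro β C hβ0 hβ2 hC hind
    set C4 : ℝ := 4*C + 2*|lam| with hC4
    have hC40 : 0 ≤ C4 := by
      have := abs_nonneg lam; simp only [hC4]; linarith
    refine ⟨6*K/m + 2*K*C4/m + 3, by positivity, ?_⟩
    intro x hx
    have hx1 : (1:ℝ) ≤ x := le_trans hR₁1 hx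
    have hx0 : (0:ℝ) < x := by linarith
    set δ : ℝ := x ^ ((β + 2/m - 3)/2) with hδdef
    have hδ0 : 0 < δ := Real.rpow_pos_of_pos hx0 _
    have hδ1 : δ ≤ 1 := by
      apply Real.rpow_le_one_of_one_le_of_nonpos hx1
      have : β + 2/m - 3 ≤ 0 := by linarith
      linarith
    have hxR₀ : R₀ ≤ x := le_trans hR₁0 hx
    have hb0 : 0 ≤ p x := (hup x hxR₀).1
    have hbK : p x ≤ K * x ^ (2/m) := (hup x hxR₀).2
    have hba : p x ≤ p (x+δ) := hmono (by linarith)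
    have hlowx := hlow x hx
    have hbpos : 0 < p x := by
      rcases eq_or_lt_of_le hb0 with h | h
      · exfalso
        rw [← h, Real.zero_rpow (by positivity), mul_zero] at hlowx
        nlinarith
      · exact h
    have ha0 : 0 < p (x+δ) := lt_of_lt_of_le hbpos hba
    have hPa : P (x+δ) ≤ C * (x+δ)^β := hind (x+δ) (by linarith)
    have h9 : c * (p (x+δ)) ^ m ≤ C * (x+δ)^β + (x+δ)^2 + |lam| := by
      have h := hODE (x+δ)
      rw [abs_of_nonneg ha0.le] at h
      have := neg_abs_le lam
      linarith
    have h10 : (x+δ)^β ≤ 4 * x^β := by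
      have e1 : (x+δ)^β ≤ (2*x)^β := Real.rpow_le_rpow (by linarith) (by linarith) hβ0
      have e2 : ((2:ℝ)*x)^β = 2^β * x^β := Real.mul_rpow (by norm_num) hx0.le
      have e4 : (2:ℝ)^(2:ℝ) = 4 := by
        rw [show (2:ℝ) = ((2:ℕ):ℝ) by norm_num, Real.rpow_natCast]; norm_num
      have e3 : (2:ℝ)^β ≤ 4 := by
        have := Real.rpow_le_rpow_of_exponent_le one_le_two hβ2
        rwa [e4] at this
      have hxβ : (0:ℝ) ≤ x^β := (Real.rpow_pos_of_pos hx0 β).le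
      calc (x+δ)^β ≤ 2^β * x^β := by rw [← e2]; exact e1
        _ ≤ 4 * x^β := mul_le_mul_of_nonneg_right e3 hxβ
    have h11 : (x+δ)^2 - x^2 ≤ 3*x*δ := by nlinarith
    have h12 : x^2 - |lam| ≤ c * (p x) ^ m := by
      have h := hODE x
      rw [abs_of_nonneg hb0] at h
      have := hP0 x
      have := le_abs_self lam
      linarith
    have hxβ1 : (1:ℝ) ≤ x ^ β := by
      have := Real.rpow_le_rpow_of_exponent_le hx1 hβ0
      rwa [Real.rpow_zero] at this
    have h13 : c * (p (x+δ))^m - c * (p x)^m ≤ 3*x*δ + C4 * x^β := by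
      have e1 : |lam| ≤ |lam| * x^β := le_mul_of_one_le_right (abs_nonneg _) hxβ1
      have e2 : C * (x+δ)^β ≤ C * (4 * x^β) := mul_le_mul_of_nonneg_left h10 hC
      have eq1 : C * (4 * x^β) = 4*(C*x^β) := by ring
      have eC4 : C4 * x^β = 4*(C*x^β) + 2*(|lam| * x^β) := by rw [hC4]; ring
      linarith [h9, h11, h12]
    have htan := rpow_tangent hbpos hba hm1
    set T := x ^ ((β + 2/m - 1)/2) with hT
    have hTpos : 0 < T := Real.rpow_pos_of_pos hx0 _
    have F1 : x * δ = T := by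
      rw [hδdef, hT]
      nth_rewrite 1 [show x = x^(1:ℝ) by rw [Real.rpow_one]]
      rw [← Real.rpow_add hx0]
      congr 1; ring
    have F2 : x^β * x^(2/m) = T * (x^2 * δ) := by
      rw [hδdef, hT, ← Real.rpow_natCast x 2, ← Real.rpow_add hx0,
        ← Real.rpow_add hx0, ← Real.rpow_add hx0]
      congr 1; push_cast; ring
    have F3 : x^(2/m - 1) ≤ T := Real.rpow_le_rpow_of_exponent_le hx1 (by linarith)
    have F4 : x * x^(2/m) = x^(2/m-1) * x^2 := by
      rw [← Real.rpow_natCast x 2]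
      nth_rewrite 1 [show x = x^(1:ℝ) by rw [Real.rpow_one]]
      rw [← Real.rpow_add hx0, ← Real.rpow_add hx0]
      congr 1; push_cast; ring
    -- key multiplicative inequality
    have hab0 : 0 ≤ p (x+δ) - p x := by linarith
    have key : m * (p (x+δ) - p x) * (x^2/2) ≤ (3*x*δ + C4*x^β) * (K * x^(2/m)) := by
      have hD0 : 0 ≤ 3*x*δ + C4*x^β := by positivity
      calc m * (p (x+δ) - p x) * (x^2/2)
          ≤ m * (p (x+δ) - p x) * (c*(p x)^m) :=
            mul_le_mul_of_nonneg_left hlowx (by positivity)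
        _ = c*(m*(p (x+δ) - p x)*(p x)^m) := by ring
        _ ≤ c*(((p (x+δ))^m - (p x)^m)*(p x)) := mul_le_mul_of_nonneg_left htan hc.le
        _ = (c*(p (x+δ))^m - c*(p x)^m)*(p x) := by ring
        _ ≤ (3*x*δ + C4*x^β)*(p x) := mul_le_mul_of_nonneg_right h13 hb0
        _ ≤ (3*x*δ + C4*x^β)*(K*x^(2/m)) := mul_le_mul_of_nonneg_left hbK hD0
    -- turn key into bound on (a-b)
    have hG : p (x+δ) - p x ≤ ((6*K/m)*T + (2*K*C4/m)*T)*δ := by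
      have hxx : x*x^(2/m) ≤ T*x^2 := by
        rw [F4]
        exact mul_le_mul_of_nonneg_right F3 (by positivity)
      have t1 : 3*x*δ*(K*x^(2/m)) ≤ 3*K*T*δ*x^2 := by
        calc 3*x*δ*(K*x^(2/m)) = 3*K*δ*(x*x^(2/m)) := by ring
          _ ≤ 3*K*δ*(T*x^2) := mul_le_mul_of_nonneg_left hxx (by positivity)
          _ = 3*K*T*δ*x^2 := by ring
      have t2 : C4*x^β*(K*x^(2/m)) = K*C4*T*δ*x^2 := by
        calc C4*x^β*(K*x^(2/m)) = K*C4*(x^β*x^(2/m)) := by ring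
          _ = K*C4*(T*(x^2*δ)) := by rw [F2]
          _ = K*C4*T*δ*x^2 := by ring
      have hrw : (m*x^2/2)*((((6*K/m)*T + (2*K*C4/m)*T))*δ) =
          3*K*T*δ*x^2 + K*C4*T*δ*x^2 := by
        field_simp
        ring
      have h14 : (m*x^2/2)*(p (x+δ) - p x) ≤
          (m*x^2/2)*((((6*K/m)*T + (2*K*C4/m)*T))*δ) := by
        calc (m*x^2/2)*(p (x+δ) - p x) = m*(p (x+δ) - p x)*(x^2/2) := by ring
          _ ≤ (3*x*δ + C4*x^β)*(K*x^(2/m)) := key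
          _ = 3*x*δ*(K*x^(2/m)) + C4*x^β*(K*x^(2/m)) := by ring
          _ ≤ 3*K*T*δ*x^2 + K*C4*T*δ*x^2 := by linarith [t1, le_of_eq t2]
          _ = (m*x^2/2)*((((6*K/m)*T + (2*K*C4/m)*T))*δ) := hrw.symm
      exact le_of_mul_le_mul_left h14 (by positivity)
    have hMI := MI x δ hx hδ0 hδ1
    have h15 : (p (x+δ) - p x)/δ ≤ (6*K/m)*T + (2*K*C4/m)*T := (div_le_iff₀ hδ0).mpr hG
    have h16 : (2*x+1)*δ ≤ 3*T := by
      rw [← F1]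
      nlinarith [hδ0.le]
    calc P x ≤ (p (x+δ) - p x)/δ + (2*x+1)*δ := hMI
      _ ≤ (6*K/m)*T + (2*K*C4/m)*T + 3*T := by linarith
      _ = (6*K/m + 2*K*C4/m + 3) * T := by ring
  -- Induction
  obtain ⟨s, hsdef⟩ : ∃ s : ℝ, s = 1/2 - 1/m := ⟨_, rfl⟩
  have hsp : (0:ℝ) < s := by
    rw [hsdef]
    have : 1/m < 1/2 := by
      apply one_div_lt_one_div_of_lt <;> linarith
    linarith
  have h2ms : 2/m - 1 = -(2*s) := by rw [hsdef]; ring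
  have main : ∀ k : ℕ, ∃ C : ℝ, 0 ≤ C ∧ ∀ x, R₁ ≤ x → P x ≤ C * x ^ (max (2 - k*s) 0) := by
    intro k
    induction k with
    | zero =>
      refine ⟨|lam| + c*K^m, by positivity, ?_⟩
      intro x hx
      have hx1 : (1:ℝ) ≤ x := le_trans hR₁1 hx
      have hx0 : (0:ℝ) < x := by linarith
      have hexp : max (2 - (0:ℕ)*s) 0 = (2:ℝ) := by
        norm_num
      rw [hexp]
      have hb0 : 0 ≤ p x := (hup x (le_trans hR₁0 hx)).1
      have hbK : p x ≤ K * x ^ (2/m) := (hup x (le_trans hR₁0 hx)).2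
      have hpm : |p x|^m ≤ (K*x^(2/m))^m := by
        apply Real.rpow_le_rpow (abs_nonneg _) _ hm0.le
        rw [abs_of_nonneg hb0]; exact hbK
      have hKx : (K*x^(2/m))^m = K^m * x^(2:ℝ) := by
        rw [Real.mul_rpow hK (Real.rpow_pos_of_pos hx0 _).le, ← Real.rpow_mul hx0.le]
        congr 2
        field_simp
      have hx2_1 : (1:ℝ) ≤ x^(2:ℝ) := by
        have := Real.rpow_le_rpow_of_exponent_le hx1 (by norm_num : (0:ℝ) ≤ 2)
        rwa [Real.rpow_zero] at this
      have hx2eq : x^(2:ℕ) = x^(2:ℝ) := by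
        rw [← Real.rpow_natCast x 2]; norm_num
      have hO := hODE x
      have hlam : lam ≤ |lam| * x^(2:ℝ) := by
        have h1 := le_abs_self lam
        have h2 : |lam| ≤ |lam| * x^(2:ℝ) := le_mul_of_one_le_right (abs_nonneg _) hx2_1
        linarith
      have hcm : c * |p x|^m ≤ c * K^m * x^(2:ℝ) := by
        have := mul_le_mul_of_nonneg_left hpm hc.le
        rw [hKx] at this
        linarith [this]
      have hx2nn : (0:ℝ) ≤ x^(2:ℕ) := by positivity
      rw [hPdef] at *
      rw [hO]
      rw [hx2eq] at *
      nlinarith [hcm, hlam, hx2nn]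
    | succ k ih =>
      obtain ⟨C, hC0, hC⟩ := ih
      have hβ0 : (0:ℝ) ≤ max (2 - k*s) 0 := le_max_right _ _
      have hβ2 : max (2 - k*s) 0 ≤ 2 := by
        apply max_le _ (by norm_num)
        have : (0:ℝ) ≤ (k:ℝ)*s := by positivity
        linarith
      obtain ⟨C', hC'0, hC'⟩ := step (max (2 - k*s) 0) C hβ0 hβ2 hC0 hC
      refine ⟨C', hC'0, fun x hx => ?_⟩
      have hx1 : (1:ℝ) ≤ x := le_trans hR₁1 hx
      refine (hC' x hx).trans ?_
      apply mul_le_mul_of_nonneg_left _ hC'0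
      apply Real.rpow_le_rpow_of_exponent_le hx1
      rcases le_total (2 - (k:ℝ)*s) 0 with h | h
      · rw [max_eq_right h]
        have : (0 + 2/m - 1)/2 ≤ 0 := by linarith [h2ms, hsp]
        exact this.trans (le_max_right _ _)
      · rw [max_eq_left h]
        refine le_trans ?_ (le_max_left _ _)
        push_cast
        linarith [h2ms, h]
  obtain ⟨n, hn⟩ := exists_nat_ge (2/s)
  obtain ⟨C, hC0, hC⟩ := main n
  refine ⟨C, R₁, fun x hx => ?_⟩
  have hns : 2 - (n:ℝ)*s ≤ 0 := by
    have : 2/s ≤ (n:ℝ) := hn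
    rw [div_le_iff₀ hsp] at this
    linarith
  have := hC x hx
  rwa [max_eq_right hns, Real.rpow_zero, mul_one] at this

lemma upper_of_tendsto {q : ℝ → ℝ} {e L : ℝ} (hL : 0 < L)
    (ht : Filter.Tendsto (fun x => q x / x ^ e) Filter.atTop (nhds L)) :
    ∃ R : ℝ, 1 ≤ R ∧ ∀ x, R ≤ x → 0 ≤ q x ∧ q x ≤ (L+1) * x ^ e := by
  have h1 : ∀ᶠ x in Filter.atTop, L/2 < q x / x ^ e :=
    ht.eventually (eventually_gt_nhds (by linarith))
  have h2 : ∀ᶠ x in Filter.atTop, q x / x ^ e < L+1 :=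
    ht.eventually (eventually_lt_nhds (by linarith))
  have h3 : ∀ᶠ (x:ℝ) in Filter.atTop, 1 ≤ x := Filter.eventually_ge_atTop 1
  obtain ⟨R, hR⟩ := Filter.eventually_atTop.mp ((h1.and h2).and h3)
  refine ⟨max R 1, le_max_right _ _, fun x hx => ?_⟩
  obtain ⟨⟨hA, hB⟩, hx1⟩ := hR x (le_trans (le_max_left _ _) hx)
  have hxpos : (0:ℝ) < x := by linarith
  have hxe : (0:ℝ) < x ^ e := Real.rpow_pos_of_pos hxpos e
  constructor
  · have h4 : 0 < q x / x^e := lt_trans (by positivity) hA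
    have h5 := mul_pos h4 hxe
    rw [div_mul_cancel₀ _ hxe.ne'] at h5
    exact h5.le
  · have h := mul_le_mul_of_nonneg_right hB.le hxe.le
    rwa [div_mul_cancel₀ _ hxe.ne'] at h

/-- The second derivative of the solution of the one-dimensional first corrector ODE is bounded. -/
theorem stmt1 (m lamm : ℝ) (hm : 2 < m) (φ : ℝ → ℝ)
    (hconv : ConvexOn ℝ Set.univ φ) (hC2 : ContDiff ℝ 2 φ)
    (hODE : ∀ x : ℝ, deriv (deriv φ) x =
      -x ^ 2 + lamm + m ^ (-m) * (m - 1) ^ (m - 1) * |deriv φ x| ^ m)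
    (htop : Tendsto (fun x => deriv φ x / x ^ (2 / m)) atTop
      (𝓝 (m * (m - 1) ^ (1 / m - 1))))
    (hbot : Tendsto (fun x => deriv φ x / |x| ^ (2 / m)) atBot
      (𝓝 (-(m * (m - 1) ^ (1 / m - 1))))) :
    ∃ C : ℝ, ∀ x : ℝ, |deriv (deriv φ) x| ≤ C := by
  have hm0 : (0:ℝ) < m := by linarith
  set c : ℝ := m ^ (-m) * (m - 1) ^ (m - 1) with hcdef
  have hc : 0 < c := mul_pos (Real.rpow_pos_of_pos hm0 _) (Real.rpow_pos_of_pos (by linarith) _)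
  set L : ℝ := m * (m - 1) ^ (1 / m - 1) with hLdef
  have hL : 0 < L := mul_pos hm0 (Real.rpow_pos_of_pos (by linarith) _)
  -- regularity
  have hC2' : ContDiff ℝ ((1:ℕ) + 1) φ := by exact_mod_cast hC2
  obtain ⟨hdiff, -, h1⟩ := contDiff_succ_iff_deriv.mp hC2'
  obtain ⟨hdiff2, hcont2⟩ := contDiff_one_iff_deriv.mp h1
  have hmono : Monotone (deriv φ) := fun a b hab =>
    hconv.monotoneOn_deriv (fun x _ => hdiff x) (Set.mem_univ a) (Set.mem_univ b) hab
  have hP0 : ∀ x, 0 ≤ deriv (deriv φ) x := deriv_nonneg_of_monotone hdiff2 hmono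
  -- top side
  obtain ⟨Rt, hRt1, hupt⟩ := upper_of_tendsto hL htop
  obtain ⟨C₁, R₁, hC₁⟩ := onesided m lamm c (L+1) hm hc (by linarith) (deriv φ) hdiff2 hmono
    (fun x => hODE x) Rt hRt1 hupt
  -- bottom side via reflection
  set ψ : ℝ → ℝ := fun x => φ (-x) with hψdef
  have hdψ : deriv ψ = fun x => -(deriv φ (-x)) := funext fun x => deriv_comp_neg φ x
  have hdψ2 : ∀ x, deriv (deriv ψ) x = deriv (deriv φ) (-x) := by
    intro x
    rw [hdψ]
    rw [show (fun x => -(deriv φ (-x))) = fun x => -((fun y => deriv φ (-y)) x) from rfl]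
    rw [deriv.fun_neg]
    rw [deriv_comp_neg, neg_neg]
  have hdiffψ : Differentiable ℝ (deriv ψ) := by
    rw [hdψ]
    exact (hdiff2.comp differentiable_neg).neg
  have hmonoψ : Monotone (deriv ψ) := by
    intro a b hab
    rw [hdψ]
    exact neg_le_neg (hmono (neg_le_neg hab))
  have hODEψ : ∀ x : ℝ, deriv (deriv ψ) x = -x ^ 2 + lamm + c * |deriv ψ x| ^ m := by
    intro x
    rw [hdψ2 x, hODE (-x), neg_sq]
    congr 2
    rw [hdψ]
    rw [abs_neg]
  have htopψ : Filter.Tendsto (fun x => deriv ψ x / x ^ (2 / m)) Filter.atTop (nhds L) := by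
    have hcomp : Filter.Tendsto (fun x : ℝ => deriv φ (-x) / |(-x)| ^ (2/m))
        Filter.atTop (nhds (-L)) := hbot.comp tendsto_neg_atTop_atBot
    have hneg : Filter.Tendsto (fun x : ℝ => -(deriv φ (-x) / |(-x)| ^ (2/m)))
        Filter.atTop (nhds L) := by simpa using hcomp.neg
    apply hneg.congr'
    filter_upwards [Filter.eventually_ge_atTop (1:ℝ)] with x hx
    have habs : |(-x)| = x := by rw [abs_neg, abs_of_nonneg (by linarith)]
    rw [habs, hdψ]
    ring
  obtain ⟨Rb, hRb1, hupb⟩ := upper_of_tendsto hL htopψ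
  obtain ⟨C₂, R₂, hC₂'⟩ := onesided m lamm c (L+1) hm hc (by linarith) (deriv ψ) hdiffψ hmonoψ
    hODEψ Rb hRb1 hupb
  have hC₂ : ∀ y : ℝ, y ≤ -R₂ → deriv (deriv φ) y ≤ C₂ := by
    intro y hy
    have h := hC₂' (-y) (by linarith)
    rwa [hdψ2, neg_neg] at h
  -- middle
  obtain ⟨C₃, hC₃⟩ := (isCompact_Icc (a := min (-R₂) R₁) (b := max (-R₂) R₁)).exists_bound_of_continuousOn
    hcont2.continuousOn
  refine ⟨max C₁ (max C₂ C₃), fun x => ?_⟩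
  rw [abs_of_nonneg (hP0 x)]
  rcases le_total x (min (-R₂) R₁) with h | h
  · exact le_trans (hC₂ x (le_trans h (min_le_left _ _)))
      (le_trans (le_max_left _ _) (le_max_right _ _))
  rcases le_total (max (-R₂) R₁) x with h' | h'
  · exact le_trans (hC₁ x (le_trans (le_max_right _ _) h')) (le_max_left _ _)
  · have h2 := hC₃ x ⟨h, h'⟩
    rw [Real.norm_eq_abs, abs_of_nonneg (hP0 x)] at h2
    exact le_trans h2 (le_trans (le_max_right _ _) (le_max_right _ _))
end

section
/- Let m > 2 and λ_m ∈ ℝ. Suppose φ : ℝ → ℝ is convex, twice continuously differentiable, satisfies φ''(x) = −x² + λ_m + m^{−m}(m−1)^{m−1} |φ'(x)|^m for every x ∈ ℝ, and lim_{x→+∞} φ'(x)/x^{2/m} = m(m−1)^{1/m−1}, lim_{x→−∞} φ'(x)/|x|^{2/m} = −m(m−1)^{1/m−1}. Then φ''(x) → 0 as |x| → ∞. -/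
open Filter Topology

private lemma aux_top (m lamm : ℝ) (hm : 2 < m) (φ : ℝ → ℝ)
    (hconv : ConvexOn ℝ Set.univ φ) (hC2 : ContDiff ℝ 2 φ)
    (hODE : ∀ x : ℝ, deriv (deriv φ) x =
      -x ^ 2 + lamm + m ^ (-m) * (m - 1) ^ (m - 1) * |deriv φ x| ^ m)
    (htop : Tendsto (fun x => deriv φ x / x ^ (2 / m)) atTop
      (𝓝 (m * (m - 1) ^ (1 / m - 1)))) :
    Tendsto (deriv (deriv φ)) atTop (𝓝 0) := by
  set c : ℝ := m ^ (-m) * (m - 1) ^ (m - 1) with hc_def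
  set K : ℝ := m * (m - 1) ^ (1 / m - 1) with hK_def
  have hm0 : (0 : ℝ) < m := by linarith
  have hm1 : (0 : ℝ) < m - 1 := by linarith
  have hc : 0 < c := mul_pos (Real.rpow_pos_of_pos hm0 _) (Real.rpow_pos_of_pos hm1 _)
  have hK : 0 < K := mul_pos hm0 (Real.rpow_pos_of_pos hm1 _)
  have hexp : 0 < 1 - 2 / m := by
    have : 2 / m < 1 := (div_lt_one hm0).mpr (by linarith)
    linarith
  -- basic differentiability facts
  have h21 : (2 : WithTop ℕ∞) = 1 + 1 := by norm_num
  have hsplit := contDiff_succ_iff_deriv.mp (h21 ▸ hC2)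
  have hdφ : Differentiable ℝ φ := hsplit.1
  have hsplit2 := contDiff_one_iff_deriv.mp hsplit.2.2
  have hd1 : Differentiable ℝ (deriv φ) := hsplit2.1
  have hcont1 : Continuous (deriv φ) := hd1.continuous
  have hcont2 : Continuous (deriv (deriv φ)) := hsplit2.2
  have hhd : ∀ x : ℝ, HasDerivAt (deriv φ) (deriv (deriv φ) x) x :=
    fun x => (hd1 x).hasDerivAt
  -- φ'' ≥ 0 from convexity
  have hmono : Monotone (deriv φ) := by
    rw [← monotoneOn_univ]
    exact hconv.monotoneOn_deriv fun x _ => hdφ x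
  have hnn : ∀ x : ℝ, 0 ≤ deriv (deriv φ) x := by
    intro x
    have hslope : Tendsto (slope (deriv φ) x) (𝓝[>] x) (𝓝 (deriv (deriv φ) x)) :=
      (hasDerivAt_iff_tendsto_slope.mp (hhd x)).mono_left
        (nhdsWithin_mono x fun y hy => ne_of_gt hy)
    refine ge_of_tendsto hslope ?_
    filter_upwards [self_mem_nhdsWithin] with y hy
    have hy' : x < y := hy
    rw [slope_def_field]
    exact div_nonneg (sub_nonneg.mpr (hmono hy'.le)) (by linarith)
  -- eventual lower bound on φ'
  have hlow : ∀ᶠ x in atTop, K / 2 * x ^ (2 / m) ≤ deriv φ x ∧ 1 ≤ x := by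
    filter_upwards [htop.eventually_const_lt (by linarith : K / 2 < K),
      eventually_ge_atTop (1 : ℝ)] with x hx hx1
    have hxp : (0 : ℝ) < x := by linarith
    have hp : (0 : ℝ) < x ^ (2 / m) := Real.rpow_pos_of_pos hxp _
    exact ⟨((lt_div_iff₀ hp).mp hx).le, hx1⟩
  -- φ' x / x → 0
  have htend0 : Tendsto (fun x => deriv φ x / x) atTop (𝓝 0) := by
    have h1 : Tendsto (fun x : ℝ => (deriv φ x / x ^ (2 / m)) * x ^ (-(1 - 2 / m)))
        atTop (𝓝 (K * 0)) := htop.mul (tendsto_rpow_neg_atTop hexp)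
    rw [mul_zero] at h1
    refine h1.congr' ?_
    filter_upwards [eventually_gt_atTop (0 : ℝ)] with x hx
    have hne : x ^ (2 / m) ≠ 0 := (Real.rpow_pos_of_pos hx _).ne'
    rw [show -(1 - 2 / m) = 2 / m - 1 by ring, Real.rpow_sub hx, Real.rpow_one,
      div_mul_div_comm, mul_comm (deriv φ x), mul_div_mul_left _ _ hne]
  -- now prove the limit
  rw [Metric.tendsto_nhds]
  intro ε hε
  by_contra hcon
  rw [Filter.not_eventually] at hcon
  -- constant E
  set E : ℝ := c * (ε / 2) * m * (K / 2) ^ (m - 1) with hE_def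
  have hEpos : 0 < E :=
    mul_pos (mul_pos (mul_pos hc (by linarith)) hm0) (Real.rpow_pos_of_pos (by linarith) _)
  have hEev : ∀ᶠ y in atTop, 3 ≤ E * y ^ (1 - 2 / m) := by
    have := (tendsto_rpow_atTop hexp).const_mul_atTop hEpos
    exact this.eventually_ge_atTop 3
  obtain ⟨X, hX⟩ := (hlow.and hEev).exists_forall_of_atTop
  -- positivity of φ''' wherever X ≤ y and φ'' y ≥ ε/2
  have hkey : ∀ y : ℝ, X ≤ y → ε / 2 ≤ deriv (deriv φ) y →
      HasDerivAt (deriv (deriv φ))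
        (-(2 * y ^ 1) + c * (deriv (deriv φ) y * m * deriv φ y ^ (m - 1))) y ∧
      0 < -(2 * y ^ 1) + c * (deriv (deriv φ) y * m * deriv φ y ^ (m - 1)) := by
    intro y hXy hεy
    obtain ⟨⟨hylow, hy1⟩, hyE⟩ := hX y hXy
    have hy0 : (0 : ℝ) < y := by linarith
    have hyp : (0 : ℝ) < y ^ (2 / m) := Real.rpow_pos_of_pos hy0 _
    have hφ'pos : 0 < deriv φ y := lt_of_lt_of_le (by positivity) hylow
    have hD : HasDerivAt (fun z : ℝ => -z ^ 2 + lamm + c * deriv φ z ^ m)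
        (-(2 * y ^ 1) + c * (deriv (deriv φ) y * m * deriv φ y ^ (m - 1))) y := by
      have h1 : HasDerivAt (fun z : ℝ => -z ^ 2 + lamm) (-(2 * y ^ 1)) y := by
        simpa using ((hasDerivAt_pow 2 y).neg.add_const lamm)
      have h2 : HasDerivAt (fun z : ℝ => c * deriv φ z ^ m)
          (c * (deriv (deriv φ) y * m * deriv φ y ^ (m - 1))) y :=
        ((hhd y).rpow_const (Or.inl hφ'pos.ne')).const_mul c
      exact h1.add h2
    have heq : deriv (deriv φ) =ᶠ[𝓝 y] fun z : ℝ => -z ^ 2 + lamm + c * deriv φ z ^ m := by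
      have hopen : {z : ℝ | 0 < deriv φ z} ∈ 𝓝 y :=
        (isOpen_lt continuous_const hcont1).mem_nhds hφ'pos
      filter_upwards [hopen] with z hz
      rw [hODE z, abs_of_pos hz]
    have hDD : HasDerivAt (deriv (deriv φ))
        (-(2 * y ^ 1) + c * (deriv (deriv φ) y * m * deriv φ y ^ (m - 1))) y :=
      hD.congr_of_eventuallyEq heq
    refine ⟨hDD, ?_⟩
    -- lower bound the nonlinear term
    have hb1 : (K / 2 * y ^ (2 / m)) ^ (m - 1) ≤ deriv φ y ^ (m - 1) :=
      Real.rpow_le_rpow (by positivity) hylow (by linarith)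
    have hb2 : (K / 2 * y ^ (2 / m)) ^ (m - 1)
        = (K / 2) ^ (m - 1) * y ^ (2 / m * (m - 1)) := by
      rw [Real.mul_rpow (by linarith) hyp.le, Real.rpow_mul hy0.le]
    have hb3 : y ^ (2 / m * (m - 1)) = y ^ (1 - 2 / m) * y := by
      rw [show 2 / m * (m - 1) = (1 - 2 / m) + 1 by field_simp; ring,
        Real.rpow_add hy0, Real.rpow_one]
    have hchain : E * (y ^ (1 - 2 / m) * y)
        ≤ c * (deriv (deriv φ) y * m * deriv φ y ^ (m - 1)) := by
      have hstep : E * (y ^ (1 - 2 / m) * y)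
          = c * ((ε / 2) * m * ((K / 2) ^ (m - 1) * y ^ (2 / m * (m - 1)))) := by
        rw [hb3]; ring
      rw [hstep]
      have h1 : (ε / 2) * m * ((K / 2) ^ (m - 1) * y ^ (2 / m * (m - 1)))
          ≤ deriv (deriv φ) y * m * deriv φ y ^ (m - 1) := by
        rw [← hb2]
        have hA : (0:ℝ) ≤ (K / 2 * y ^ (2 / m)) ^ (m - 1) := by positivity
        have := mul_le_mul hεy hb1 hA (hnn y)
        calc (ε / 2) * m * (K / 2 * y ^ (2 / m)) ^ (m - 1)
            = (ε / 2) * ((K / 2 * y ^ (2 / m)) ^ (m - 1)) * m := by ring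
          _ ≤ deriv (deriv φ) y * (deriv φ y ^ (m - 1)) * m := by
              exact mul_le_mul_of_nonneg_right this hm0.le
          _ = deriv (deriv φ) y * m * deriv φ y ^ (m - 1) := by ring
      exact mul_le_mul_of_nonneg_left h1 hc.le
    have h3y : 3 * y ≤ E * (y ^ (1 - 2 / m) * y) := by
      rw [← mul_assoc]
      exact mul_le_mul_of_nonneg_right hyE hy0.le
    have : 3 * y ≤ c * (deriv (deriv φ) y * m * deriv φ y ^ (m - 1)) :=
      le_trans h3y hchain
    rw [pow_one]
    nlinarith
  -- pick x₀ with large φ''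
  obtain ⟨x₀, hXx₀, hεx₀⟩ : ∃ x₀, X ≤ x₀ ∧ ε ≤ deriv (deriv φ) x₀ := by
    obtain ⟨x₀, h1, h2⟩ := (hcon.and_eventually (eventually_ge_atTop X)).exists
    refine ⟨x₀, h2, ?_⟩
    rw [Real.dist_eq, sub_zero, abs_of_nonneg (hnn x₀), not_lt] at h1
    exact h1
  -- φ'' stays above ε/2 on [x₀, ∞)
  have hstay : ∀ x, x₀ ≤ x → ε / 2 ≤ deriv (deriv φ) x := by
    intro x₁ hx₁
    by_contra hlt
    rw [not_le] at hlt
    have hx₀x₁ : x₀ < x₁ := by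
      rcases lt_or_eq_of_le hx₁ with h | h
      · exact h
      · exfalso; rw [h] at hεx₀; linarith
    set S : Set ℝ := Set.Icc x₀ x₁ ∩ deriv (deriv φ) ⁻¹' Set.Iic (ε / 2) with hS_def
    have hSclosed : IsClosed S := isClosed_Icc.inter (isClosed_Iic.preimage hcont2)
    have hSne : S.Nonempty := ⟨x₁, ⟨hx₁, le_rfl⟩, hlt.le⟩
    have hSbdd : BddBelow S := ⟨x₀, fun z hz => hz.1.1⟩
    set t : ℝ := sInf S with ht_def
    have htS : t ∈ S := hSclosed.csInf_mem hSne hSbdd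
    have hx₀t : x₀ < t := by
      rcases lt_or_eq_of_le htS.1.1 with h | h
      · exact h
      · exfalso
        have := htS.2
        rw [← h] at this
        simp only [Set.mem_preimage, Set.mem_Iic] at this
        linarith
    have hSM : StrictMonoOn (deriv (deriv φ)) (Set.Icc x₀ t) := by
      refine strictMonoOn_of_deriv_pos (convex_Icc x₀ t) hcont2.continuousOn ?_
      intro y hy
      rw [interior_Icc] at hy
      have hXy : X ≤ y := le_trans hXx₀ hy.1.le
      have hεy : ε / 2 ≤ deriv (deriv φ) y := by
        by_contra hy2
        rw [not_le] at hy2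
        have hymem : y ∈ S := ⟨⟨hy.1.le, le_trans hy.2.le htS.1.2⟩, hy2.le⟩
        have : t ≤ y := csInf_le hSbdd hymem
        linarith [hy.2]
      obtain ⟨hDD, hpos⟩ := hkey y hXy hεy
      rw [hDD.deriv]
      exact hpos
    have h1 : deriv (deriv φ) x₀ < deriv (deriv φ) t :=
      hSM ⟨le_rfl, hx₀t.le⟩ ⟨hx₀t.le, le_rfl⟩ hx₀t
    have h2 : deriv (deriv φ) t ≤ ε / 2 := htS.2
    linarith
  -- hence φ' grows at least linearly
  have hgmono : MonotoneOn (fun y => deriv φ y - ε / 2 * y) (Set.Ici x₀) := by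
    refine monotoneOn_of_deriv_nonneg (convex_Ici x₀)
      ((hcont1.sub (continuous_const.mul continuous_id)).continuousOn) ?_ ?_
    · intro y _
      exact ((hd1 y).sub (((differentiable_id).const_mul (ε/2)) y)).differentiableWithinAt
    · intro y hy
      rw [interior_Ici] at hy
      have hdy : HasDerivAt (fun y => deriv φ y - ε / 2 * y)
          (deriv (deriv φ) y - ε / 2) y := by
        exact ((hhd y).sub ((hasDerivAt_id' y).const_mul (ε / 2))).congr_deriv (by ring)
      rw [hdy.deriv]
      have := hstay y hy.le
      linarith
  obtain ⟨c₀, hgrow⟩ : ∃ c₀ : ℝ, ∀ x, x₀ ≤ x → c₀ + ε / 2 * x ≤ deriv φ x := by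
    refine ⟨deriv φ x₀ - ε / 2 * x₀, fun x hx => ?_⟩
    have := hgmono (Set.self_mem_Ici) (Set.mem_Ici.mpr hx) hx
    simp only at this
    linarith
  -- contradiction with φ' x / x → 0
  have hsmall : ∀ᶠ x in atTop, |deriv φ x / x| < ε / 4 := by
    have h := Metric.tendsto_nhds.mp htend0 (ε / 4) (by linarith)
    filter_upwards [h] with x hx
    rwa [Real.dist_eq, sub_zero] at hx
  obtain ⟨x, hx1, hx2, hx3, hx4⟩ : ∃ x : ℝ, x₀ ≤ x ∧ 4 * |c₀| / ε ≤ x ∧ 1 ≤ x ∧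
      |deriv φ x / x| < ε / 4 := by
    obtain ⟨x, h⟩ := ((eventually_ge_atTop x₀).and ((eventually_ge_atTop (4 * |c₀| / ε)).and
      ((eventually_ge_atTop (1:ℝ)).and hsmall))).exists
    exact ⟨x, h.1, h.2.1, h.2.2.1, h.2.2.2⟩
  have hx0 : (0 : ℝ) < x := by linarith
  have hc₀x : -(ε / 4) * x ≤ c₀ := by
    have h1 : 4 * |c₀| ≤ x * ε := (div_le_iff₀ hε).mp hx2
    have h3 : -|c₀| ≤ c₀ := neg_abs_le c₀
    nlinarith [h1, h3]
  have hφx : c₀ + ε / 2 * x ≤ deriv φ x := hgrow x hx1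
  have hfinal : ε / 4 ≤ deriv φ x / x := by
    have h1 : (c₀ + ε / 2 * x) / x ≤ deriv φ x / x := by gcongr
    have h2 : (c₀ + ε / 2 * x) / x = c₀ / x + ε / 2 := by
      rw [add_div, mul_div_assoc, div_self hx0.ne', mul_one]
    have h3 : -(ε / 4) ≤ c₀ / x := by
      rw [le_div_iff₀ hx0]
      linarith [hc₀x]
    have h4 : c₀ / x + ε / 2 ≤ deriv φ x / x := by rw [← h2]; exact h1
    linarith
  have : deriv φ x / x < ε / 4 := lt_of_abs_lt hx4
  linarith

/-- The second derivative of the solution of the one-dimensional first corrector ODE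
tends to `0` as `|x| → ∞`. -/
theorem stmt2 (m lamm : ℝ) (hm : 2 < m) (φ : ℝ → ℝ)
    (hconv : ConvexOn ℝ Set.univ φ) (hC2 : ContDiff ℝ 2 φ)
    (hODE : ∀ x : ℝ, deriv (deriv φ) x =
      -x ^ 2 + lamm + m ^ (-m) * (m - 1) ^ (m - 1) * |deriv φ x| ^ m)
    (htop : Tendsto (fun x => deriv φ x / x ^ (2 / m)) atTop
      (𝓝 (m * (m - 1) ^ (1 / m - 1))))
    (hbot : Tendsto (fun x => deriv φ x / |x| ^ (2 / m)) atBot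
      (𝓝 (-(m * (m - 1) ^ (1 / m - 1))))) :
    Tendsto (deriv (deriv φ)) (cocompact ℝ) (𝓝 0) := by
  have hmaintop := aux_top m lamm hm φ hconv hC2 hODE htop
  -- reflected function
  set ψ : ℝ → ℝ := fun x => φ (-x) with hψ_def
  have hconvψ : ConvexOn ℝ Set.univ ψ := by
    refine ⟨convex_univ, ?_⟩
    intro x _ y _ a b ha hb hab
    have h := hconv.2 (Set.mem_univ (-x)) (Set.mem_univ (-y)) ha hb hab
    simp only [smul_eq_mul, hψ_def] at h ⊢
    have hx : -(a * x + b * y) = a * -x + b * -y := by ring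
    rw [hx]
    exact h
  have hC2ψ : ContDiff ℝ 2 ψ := hC2.comp (contDiff_id.neg)
  have hdψ : ∀ x, deriv ψ x = -deriv φ (-x) := fun x => deriv_comp_neg φ x
  have hddψ : ∀ x, deriv (deriv ψ) x = deriv (deriv φ) (-x) := by
    intro x
    have h1 : deriv ψ = fun y => -deriv φ (-y) := funext hdψ
    rw [h1]
    have h2 : deriv (fun y : ℝ => -deriv φ (-y)) x
        = -deriv (fun y : ℝ => deriv φ (-y)) x := deriv.neg
    rw [h2, deriv_comp_neg (deriv φ), neg_neg]
  have hODEψ : ∀ x : ℝ, deriv (deriv ψ) x =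
      -x ^ 2 + lamm + m ^ (-m) * (m - 1) ^ (m - 1) * |deriv ψ x| ^ m := by
    intro x
    rw [hddψ x, hODE (-x), hdψ x, abs_neg, neg_sq]
  have htopψ : Tendsto (fun x => deriv ψ x / x ^ (2 / m)) atTop
      (𝓝 (m * (m - 1) ^ (1 / m - 1))) := by
    have h1 : Tendsto (fun x : ℝ => deriv φ (-x) / |-x| ^ (2 / m)) atTop
        (𝓝 (-(m * (m - 1) ^ (1 / m - 1)))) := hbot.comp tendsto_neg_atTop_atBot
    have h2 := h1.neg
    rw [neg_neg] at h2
    refine h2.congr' ?_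
    filter_upwards [eventually_gt_atTop (0 : ℝ)] with x hx
    rw [hdψ x, abs_neg, abs_of_pos hx, neg_div]
  have hmainbot' := aux_top m lamm hm ψ hconvψ hC2ψ hODEψ htopψ
  have hmainbot'' : Tendsto (fun x => deriv (deriv φ) (-x)) atTop (𝓝 0) :=
    hmainbot'.congr hddψ
  have hmainbot : Tendsto (deriv (deriv φ)) atBot (𝓝 0) := by
    have h := hmainbot''.comp (tendsto_neg_atBot_atTop (G := ℝ))
    refine h.congr fun x => ?_
    simp [Function.comp]
  rw [cocompact_eq_atBot_atTop]
  exact tendsto_sup.mpr ⟨hmainbot, hmaintop⟩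
end

section
/- Let d ≥ 1, m > 2, m^* := 1/(3m−2), R > 0, κ > 0, λ_m ∈ ℝ, and let A be a real d×d matrix with A_{jj} > 0 for every j. Suppose φ : ℝ → ℝ is twice differentiable and satisfies φ''(y) = −y² + λ_m + m^{−m}(m−1)^{m−1} |φ'(y)|^m for every y ∈ ℝ. Define γ_j := (2 (m/(κ(m−1)))^{m−1} R^{3m−1} A_{jj}^{−m})^{m^*}, β_j := 2^{−4m^*} A_{jj}^{4mm^*−1} R^{−1−4m^*} (κ(m−1)/m)^{4(m−1)m^*}, and λ := λ_m Σ_{j=1}^d R/(2γ_j²). Then the function w(x) := Σ_{j=1}^d β_j φ(γ_j x_j) satisfies, for every x ∈ ℝ^d, (R/2)|x|² − (1/m) Σ_{j=1}^d κ^{1−m} |∂_j w(x)|^m + (1/(2R²)) Σ_{i,j=1}^d A_{ij} ∂_i∂_j w(x) = λ. -/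
open ContinuousLinearMap in
private lemma hasF {d : ℕ} (β γ : ℝ) (ψ : ℝ → ℝ) (hψ : Differentiable ℝ ψ) (j : Fin d) (x : Fin d → ℝ) :
    HasFDerivAt (fun y : Fin d → ℝ => β * ψ (γ * y j))
      ((β * (deriv ψ (γ * x j) * γ)) • (ContinuousLinearMap.proj j : (Fin d → ℝ) →L[ℝ] ℝ)) x := by
  have h1 : HasDerivAt ψ (deriv ψ (γ * x j)) (γ * x j) := (hψ _).hasDerivAt
  have h2 : HasFDerivAt (fun y : Fin d → ℝ => γ * y j)
      (γ • (ContinuousLinearMap.proj j : (Fin d → ℝ) →L[ℝ] ℝ)) x := by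
    exact (hasFDerivAt_apply j x).const_mul γ
  have h3 := (h1.comp_hasFDerivAt x h2).const_mul β
  refine h3.congr_fderiv ?_
  ext v
  simp [smul_eq_mul]
  ring

private lemma key1 (m R κ a β γ : ℝ) (hm : 2 < m) (hR : 0 < R) (hκ : 0 < κ) (ha : 0 < a)
    (hβ : β = (2:ℝ) ^ (-(4 * (1/(3*m-2)))) * a ^ (4 * m * (1/(3*m-2)) - 1) *
        R ^ (-(1 + 4 * (1/(3*m-2)))) * (κ * (m - 1) / m) ^ (4 * (m - 1) * (1/(3*m-2))))
    (hγ : γ = (2 * (m / (κ * (m - 1))) ^ (m - 1) * R ^ (3 * m - 1) * a ^ (-m)) ^ (1/(3*m-2))) :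
    a * β * γ ^ (4:ℕ) = R ^ (3:ℕ) := by
  subst hβ hγ
  have hm0 : 0 < m := by linarith
  have hm1 : 0 < m - 1 := by linarith
  have h32 : (3*m-2) ≠ 0 := by intro h; nlinarith
  have hc : 0 < κ * (m - 1) / m := by positivity
  have hq : 0 < m / (κ * (m - 1)) := by positivity
  have hB : 0 < 2 * (m / (κ * (m - 1))) ^ (m - 1) * R ^ (3 * m - 1) * a ^ (-m) := by positivity
  have hL : 0 < a * ((2:ℝ) ^ (-(4 * (1/(3*m-2)))) * a ^ (4 * m * (1/(3*m-2)) - 1) * R ^ (-(1 + 4 * (1/(3*m-2)))) *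
        (κ * (m - 1) / m) ^ (4 * (m - 1) * (1/(3*m-2)))) *
      ((2 * (m / (κ * (m - 1))) ^ (m - 1) * R ^ (3 * m - 1) * a ^ (-m)) ^ (1/(3*m-2))) ^ (4:ℕ) := by positivity
  have hRp : (0:ℝ) < R ^ (3:ℕ) := by positivity
  apply Real.log_injOn_pos (Set.mem_Ioi.2 hL) (Set.mem_Ioi.2 hRp)
  have l1 : Real.log (((2 * (m / (κ * (m - 1))) ^ (m - 1) * R ^ (3 * m - 1) * a ^ (-m)) ^ (1/(3*m-2))) ^ (4:ℕ))
      = 4 * ((1/(3*m-2)) * (Real.log 2 + ((m-1) * (Real.log m - Real.log (κ * (m-1))) + ((3*m-1) * Real.log R + (-m) * Real.log a)))) := by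
    rw [Real.log_pow, Real.log_rpow hB, Real.log_mul (by positivity) (by positivity),
      Real.log_mul (by positivity) (by positivity), Real.log_mul (by positivity) (by positivity),
      Real.log_rpow hq, Real.log_rpow hR, Real.log_rpow ha, Real.log_div (by positivity) (by positivity)]
    push_cast; ring
  rw [Real.log_mul (by positivity) (by positivity), l1, Real.log_mul (by positivity) (by positivity),
    Real.log_mul (by positivity) (by positivity), Real.log_mul (by positivity) (by positivity),
    Real.log_mul (by positivity) (by positivity),
    Real.log_rpow (by norm_num), Real.log_rpow ha, Real.log_rpow hR, Real.log_rpow hc,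
    Real.log_div (by positivity) hm0.ne', Real.log_mul hκ.ne' hm1.ne',
    Real.log_pow]
  push_cast
  field_simp
  ring

private lemma key2 (m R κ a β γ : ℝ) (hm : 2 < m) (hR : 0 < R) (hκ : 0 < κ) (ha : 0 < a)
    (hβ : β = (2:ℝ) ^ (-(4 * (1/(3*m-2)))) * a ^ (4 * m * (1/(3*m-2)) - 1) *
        R ^ (-(1 + 4 * (1/(3*m-2)))) * (κ * (m - 1) / m) ^ (4 * (m - 1) * (1/(3*m-2))))
    (hγ : γ = (2 * (m / (κ * (m - 1))) ^ (m - 1) * R ^ (3 * m - 1) * a ^ (-m)) ^ (1/(3*m-2))) :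
    κ ^ (1 - m) * (β * γ) ^ m * (2 * R ^ (2:ℕ) * γ ^ (2:ℕ))
      = a * β * γ ^ (4:ℕ) * (m * (m ^ (-m) * (m - 1) ^ (m - 1))) := by
  have hm0 : 0 < m := by linarith
  have hm1 : 0 < m - 1 := by linarith
  have h32 : (3*m-2) ≠ 0 := by intro h; nlinarith
  have hc : 0 < κ * (m - 1) / m := by positivity
  have hq : 0 < m / (κ * (m - 1)) := by positivity
  have hB : 0 < 2 * (m / (κ * (m - 1))) ^ (m - 1) * R ^ (3 * m - 1) * a ^ (-m) := by positivity
  have hβ0 : 0 < β := by rw [hβ]; positivity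
  have hγ0 : 0 < γ := by rw [hγ]; positivity
  have hL : 0 < κ ^ (1 - m) * (β * γ) ^ m * (2 * R ^ (2:ℕ) * γ ^ (2:ℕ)) := by positivity
  have hRp : 0 < a * β * γ ^ (4:ℕ) * (m * (m ^ (-m) * (m - 1) ^ (m - 1))) := by positivity
  apply Real.log_injOn_pos (Set.mem_Ioi.2 hL) (Set.mem_Ioi.2 hRp)
  have lγ : Real.log γ = (1/(3*m-2)) * (Real.log 2 + ((m-1) * (Real.log m - (Real.log κ + Real.log (m-1))) + ((3*m-1) * Real.log R + (-m) * Real.log a))) := by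
    rw [hγ, Real.log_rpow hB, Real.log_mul (by positivity) (by positivity),
      Real.log_mul (by positivity) (by positivity), Real.log_mul (by positivity) (by positivity),
      Real.log_rpow hq, Real.log_rpow hR,
      Real.log_rpow ha, Real.log_div (by positivity) (by positivity), Real.log_mul hκ.ne' hm1.ne']
    ring
  have lβ : Real.log β = -(4 * (1/(3*m-2))) * Real.log 2 + (4 * m * (1/(3*m-2)) - 1) * Real.log a
      + -(1 + 4 * (1/(3*m-2))) * Real.log R
      + 4 * (m - 1) * (1/(3*m-2)) * (Real.log κ + Real.log (m-1) - Real.log m) := by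
    rw [hβ, Real.log_mul (by positivity) (by positivity), Real.log_mul (by positivity) (by positivity),
      Real.log_mul (by positivity) (by positivity), Real.log_rpow (by norm_num), Real.log_rpow ha,
      Real.log_rpow hR, Real.log_rpow hc, Real.log_div (by positivity) hm0.ne',
      Real.log_mul hκ.ne' hm1.ne']
  repeat rw [Real.log_mul (by positivity) (by positivity)]
  repeat rw [Real.log_pow]
  rw [Real.log_rpow hκ, Real.log_rpow (mul_pos hβ0 hγ0), Real.log_rpow hm0, Real.log_rpow hm1,
    Real.log_mul hβ0.ne' hγ0.ne', lγ, lβ]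
  push_cast
  have h32' : m*3-2 ≠ 0 := by intro h; nlinarith
  field_simp
  ring

private lemma term_eq (m R x lamm a β γ P K Q B : ℝ) (hR : R ≠ 0) (hγ : γ ≠ 0) (hm : m ≠ 0)
    (k1 : a * β * γ ^ (4:ℕ) = R ^ (3:ℕ))
    (k2 : Q * B * (2 * R ^ (2:ℕ) * γ ^ (2:ℕ)) = a * β * γ ^ (4:ℕ) * (m * K)) :
    R/2 * x^2 - 1/m * (Q * (B * P))
      + 1/(2*R^2) * (a * (β * γ * ((-(γ*x)^2 + lamm + K*P) * γ)))
      = lamm * (R/(2*γ^2)) := by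
  field_simp
  linear_combination (m*lamm - m*γ^2*x^2) * k1 - P * k2

/-- Verification that the separable function `w(x) = Σ_j β_j φ(γ_j x_j)` built from the
one-dimensional first corrector ODE solves the multidimensional reduced first corrector
equation. -/
theorem stmt3 (d : ℕ) (hd : 1 ≤ d) (m R κ lamm : ℝ) (hm : 2 < m) (hR : 0 < R) (hκ : 0 < κ)
    (A : Matrix (Fin d) (Fin d) ℝ) (hA : ∀ j, 0 < A j j)
    (φ : ℝ → ℝ) (hφ : Differentiable ℝ φ) (hφ' : Differentiable ℝ (deriv φ))
    (hODE : ∀ y : ℝ, deriv (deriv φ) y =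
      -y ^ 2 + lamm + m ^ (-m) * (m - 1) ^ (m - 1) * |deriv φ y| ^ m) :
    let mstar : ℝ := 1 / (3 * m - 2)
    let γ : Fin d → ℝ := fun j =>
      (2 * (m / (κ * (m - 1))) ^ (m - 1) * R ^ (3 * m - 1) * A j j ^ (-m)) ^ mstar
    let β : Fin d → ℝ := fun j =>
      (2 : ℝ) ^ (-(4 * mstar)) * A j j ^ (4 * m * mstar - 1) * R ^ (-(1 + 4 * mstar)) *
        (κ * (m - 1) / m) ^ (4 * (m - 1) * mstar)
    let lam : ℝ := lamm * ∑ j, R / (2 * γ j ^ 2)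
    let w : (Fin d → ℝ) → ℝ := fun x => ∑ j, β j * φ (γ j * x j)
    ∀ x : Fin d → ℝ,
      R / 2 * (∑ i, x i ^ 2)
        - (1 / m) * ∑ j, κ ^ (1 - m) * |fderiv ℝ w x (Pi.single j 1)| ^ m
        + (1 / (2 * R ^ 2)) *
            ∑ i, ∑ j, A i j *
              fderiv ℝ (fun y => fderiv ℝ w y (Pi.single j 1)) x (Pi.single i 1)
        = lam := by
  intro mstar γ β lam w x
  have hm0 : 0 < m := by linarith
  have hm1 : 0 < m - 1 := by linarith
  have hγ0 : ∀ j, 0 < γ j := by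
    intro j
    have h := hA j
    have : 0 < 2 * (m / (κ * (m - 1))) ^ (m - 1) * R ^ (3 * m - 1) * A j j ^ (-m) := by positivity
    exact Real.rpow_pos_of_pos this _
  have hβ0 : ∀ j, 0 < β j := by
    intro j
    have h := hA j
    show 0 < (2 : ℝ) ^ (-(4 * mstar)) * A j j ^ (4 * m * mstar - 1) * R ^ (-(1 + 4 * mstar)) *
        (κ * (m - 1) / m) ^ (4 * (m - 1) * mstar)
    positivity
  have d1 : ∀ (y : Fin d → ℝ) (j : Fin d),
      fderiv ℝ w y (Pi.single j 1) = β j * (deriv φ (γ j * y j) * γ j) := by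
    intro y j
    have hw : HasFDerivAt w (∑ k : Fin d, (β k * (deriv φ (γ k * y k) * γ k)) •
        (ContinuousLinearMap.proj k : (Fin d → ℝ) →L[ℝ] ℝ)) y :=
      HasFDerivAt.fun_sum (fun k _ => hasF (β k) (γ k) φ hφ k y)
    rw [hw.fderiv]
    simp [Pi.single_apply]
  have d2 : ∀ i j : Fin d, fderiv ℝ (fun y => fderiv ℝ w y (Pi.single j 1)) x (Pi.single i 1)
      = ((β j * γ j) * (deriv (deriv φ) (γ j * x j) * γ j)) * ((Pi.single i 1 : Fin d → ℝ) j) := by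
    intro i j
    have he : (fun y => fderiv ℝ w y (Pi.single j 1)) = fun y => (β j * γ j) * deriv φ (γ j * y j) := by
      funext y; rw [d1 y j]; ring
    rw [he, (hasF (β j * γ j) (γ j) (deriv φ) hφ' j x).fderiv]
    simp
  have hdd : (∑ i, ∑ j, A i j * fderiv ℝ (fun y => fderiv ℝ w y (Pi.single j 1)) x (Pi.single i 1))
      = ∑ j, A j j * ((β j * γ j) * (deriv (deriv φ) (γ j * x j) * γ j)) := by
    refine Finset.sum_congr rfl (fun i _ => ?_)
    simp [d2, Pi.single_apply]
  rw [hdd]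
  simp only [d1]
  show _ = lamm * ∑ j, R / (2 * γ j ^ 2)
  rw [Finset.mul_sum, Finset.mul_sum, Finset.mul_sum, Finset.mul_sum,
    ← Finset.sum_sub_distrib, ← Finset.sum_add_distrib]
  refine Finset.sum_congr rfl (fun j _ => ?_)
  rw [hODE (γ j * x j)]
  have habs : |β j * (deriv φ (γ j * x j) * γ j)| ^ m
      = (β j * γ j) ^ m * |deriv φ (γ j * x j)| ^ m := by
    rw [abs_mul, abs_of_pos (hβ0 j), abs_mul, abs_of_pos (hγ0 j),
      show β j * (|deriv φ (γ j * x j)| * γ j) = (β j * γ j) * |deriv φ (γ j * x j)| by ring,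
      Real.mul_rpow (mul_pos (hβ0 j) (hγ0 j)).le (abs_nonneg _)]
  rw [habs]
  have k1 := key1 m R κ (A j j) (β j) (γ j) hm hR hκ (hA j) rfl rfl
  have k2 := key2 m R κ (A j j) (β j) (γ j) hm hR hκ (hA j) rfl rfl
  exact term_eq m R (x j) lamm (A j j) (β j) (γ j) (|deriv φ (γ j * x j)| ^ m)
    (m ^ (-m) * (m - 1) ^ (m - 1)) (κ ^ (1 - m)) ((β j * γ j) ^ m) hR.ne' (hγ0 j).ne' hm0.ne' k1 k2
end

section
/- Let d ≥ 1, m > 2, and β_j, γ_j > 0 for j = 1,…,d. Suppose φ : ℝ → ℝ is twice continuously differentiable and convex, with φ(0) = 0, φ'(0) = 0, φ''(0) > 0, and lim_{x→+∞} φ'(x)/x^{2/m} = m(m−1)^{1/m−1}, lim_{x→−∞} φ'(x)/|x|^{2/m} = −m(m−1)^{1/m−1}. Define ϖ̃(x) := Σ_{j=1}^d β_j φ(γ_j x_j). Then the quantity sup over 1 ≤ i ≤ d and x ∈ ℝ^d \ {0} of |x_i ∂_i ϖ̃(x)|/ϖ̃(x) + |∂_i ϖ̃(x)|/|x| + |∂_i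 ϖ̃(x)|/(1+|x|^{2/m}) is finite. -/
open Filter Topology Set

lemma posHalf (m c L : ℝ) (hm : 2 < m) (hc : 0 < c) (hL : 0 < L) (f : ℝ → ℝ)
    (hmono : Monotone (deriv f)) (hf'0 : deriv f 0 = 0)
    (hfnn : ∀ y, 0 ≤ f y)
    (htang : ∀ y : ℝ, 0 < y → f (y/2) + deriv f (y/2) * (y/2) ≤ f y)
    (hslope : Tendsto (fun y => deriv f y / y) (𝓝[>] (0:ℝ)) (𝓝 c))
    (htop : Tendsto (fun y => deriv f y / y ^ (2/m)) atTop (𝓝 L)) :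
    ∃ C : ℝ, 0 ≤ C ∧ ∀ y : ℝ, 0 < y → 0 < f y ∧ 0 < deriv f y ∧
      (y * deriv f y / f y ≤ C ∧ deriv f y / y ≤ C ∧ deriv f y / (1 + y^(2/m)) ≤ C) := by
  have hm0 : (0:ℝ) < m := by linarith
  have hexp1 : 2/m ≤ 1 := by rw [div_le_one hm0]; linarith
  have hev : ∀ᶠ y in 𝓝[>] (0:ℝ), deriv f y / y ∈ Ioo (c/2) (3*c/2) :=
    hslope.eventually (Ioo_mem_nhds (by linarith) (by linarith))
  obtain ⟨δ, hδ0, hδ⟩ := mem_nhdsGT_iff_exists_Ioc_subset.mp hev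
  rw [Set.mem_Ioi] at hδ0
  have hδ' : ∀ y : ℝ, 0 < y → y ≤ δ → c/2 * y < deriv f y ∧ deriv f y < 3*c/2 * y := by
    intro y hy hyδ
    obtain ⟨h1, h2⟩ := hδ ⟨hy, hyδ⟩
    constructor
    · calc c/2 * y < (deriv f y / y) * y := by apply mul_lt_mul_of_pos_right h1 hy
        _ = deriv f y := by field_simp
    · calc deriv f y = (deriv f y / y) * y := by field_simp
        _ < 3*c/2 * y := by apply mul_lt_mul_of_pos_right h2 hy
  have hev2 : ∀ᶠ y in atTop, deriv f y / y ^ (2/m) ∈ Ioo (L/2) (L+1) :=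
    htop.eventually (Ioo_mem_nhds (by linarith) (by linarith))
  obtain ⟨M₀, hM₀⟩ := eventually_atTop.mp hev2
  set M := max M₀ 1 with hMdef
  have hM1 : (1:ℝ) ≤ M := le_max_right _ _
  have hM0 : (0:ℝ) < M := by linarith
  have hM : ∀ y : ℝ, M ≤ y → L/2 * y^(2/m) < deriv f y ∧ deriv f y < (L+1) * y^(2/m) := by
    intro y hy
    have hy1 : (1:ℝ) ≤ y := le_trans hM1 hy
    have hyp : (0:ℝ) < y ^ (2/m) := Real.rpow_pos_of_pos (by linarith) _
    obtain ⟨h1, h2⟩ := hM₀ y (le_trans (le_max_left _ _) hy)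
    constructor
    · calc L/2 * y^(2/m) < (deriv f y / y^(2/m)) * y^(2/m) := mul_lt_mul_of_pos_right h1 hyp
        _ = deriv f y := by field_simp
    · calc deriv f y = (deriv f y / y^(2/m)) * y^(2/m) := by field_simp
        _ < (L+1) * y^(2/m) := mul_lt_mul_of_pos_right h2 hyp
  have hpos : ∀ y : ℝ, 0 < y → 0 < deriv f y := by
    intro y hy
    have ht0 : 0 < min y δ := lt_min hy hδ0
    have h1 := (hδ' _ ht0 (min_le_right _ _)).1
    have h2 : 0 < deriv f (min y δ) := lt_of_le_of_lt (by positivity) h1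
    exact lt_of_lt_of_le h2 (hmono (min_le_left _ _))
  have hd_nonneg : ∀ y : ℝ, 0 ≤ y → 0 ≤ deriv f y := by
    intro y hy
    rcases eq_or_lt_of_le hy with h | h
    · rw [← h, hf'0]
    · exact (hpos y h).le
  have hfpos : ∀ y : ℝ, 0 < y → 0 < f y := by
    intro y hy
    have h1 := htang y hy
    have h2 : 0 < deriv f (y/2) * (y/2) := mul_pos (hpos _ (by linarith)) (by linarith)
    have := hfnn (y/2)
    linarith
  set C1 : ℝ := 2 * max 6 (max (4*(L+1)/L) (deriv f (2*M) / deriv f (δ/2))) with hC1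
  set C2 : ℝ := max (3*c/2) (max (L+1) (deriv f M / δ)) with hC2
  set C3 : ℝ := max (deriv f M) (L+1) with hC3
  refine ⟨max C1 (max C2 C3), ?_, ?_⟩
  · have : (0:ℝ) ≤ C2 := le_trans (by positivity) (le_max_left _ _)
    exact le_trans this (le_trans (le_max_left _ _) (le_max_right _ _))
  intro y hy
  have hyd := hpos y hy
  refine ⟨hfpos y hy, hyd, ?_, ?_, ?_⟩
  · -- term 1
    refine le_trans ?_ (le_max_left _ _)
    have hd2 : 0 < deriv f (y/2) := hpos _ (by linarith)
    have hb : 0 < deriv f (y/2) * (y/2) := mul_pos hd2 (by linarith)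
    have hfb : deriv f (y/2) * (y/2) ≤ f y := le_trans (by have := hfnn (y/2); linarith) (htang y hy)
    have step1 : y * deriv f y / f y ≤ y * deriv f y / (deriv f (y/2) * (y/2)) :=
      div_le_div_of_nonneg_left (by positivity) hb hfb
    have step2 : y * deriv f y / (deriv f (y/2) * (y/2)) = 2 * (deriv f y / deriv f (y/2)) := by
      field_simp
    rw [step2] at step1
    refine le_trans step1 ?_
    rw [hC1]
    have key : deriv f y / deriv f (y/2) ≤ max 6 (max (4*(L+1)/L) (deriv f (2*M) / deriv f (δ/2))) := by
      rcases le_or_gt y δ with hyδ | hyδ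
      · refine le_trans ?_ (le_max_left _ _)
        have h1 := (hδ' y hy hyδ).2
        have h2 := (hδ' (y/2) (by linarith) (by linarith)).1
        calc deriv f y / deriv f (y/2) ≤ (3*c/2*y) / (c/2*(y/2)) :=
              div_le_div₀ (by positivity) h1.le (by positivity) h2.le
          _ = 6 := by field_simp; ring
      · rcases le_or_gt (2*M) y with hyM | hyM
        · refine le_trans ?_ (le_trans (le_max_left _ _) (le_max_right _ _))
          have h1 := (hM y (by linarith)).2
          have h2 := (hM (y/2) (by linarith)).1
          have hhalf : (0:ℝ) < y/2 := by linarith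
          have hsplit : y ^ (2/m) ≤ 2 * (y/2)^(2/m) := by
            have heq : y ^ (2/m) = 2^(2/m) * (y/2)^(2/m) := by
              rw [← Real.mul_rpow (by norm_num) (by linarith : (0:ℝ) ≤ y/2)]
              congr 1
              ring
            have h2m : (2:ℝ)^(2/m) ≤ 2 := by
              calc (2:ℝ)^(2/m) ≤ (2:ℝ)^(1:ℝ) :=
                    Real.rpow_le_rpow_of_exponent_le one_le_two hexp1
                _ = 2 := Real.rpow_one 2
            have hnn := Real.rpow_nonneg (le_of_lt hhalf) (2/m)
            nlinarith
          have hyp2 : (0:ℝ) < (y/2)^(2/m) := Real.rpow_pos_of_pos hhalf _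
          have hstep : deriv f y ≤ (L+1) * (2*(y/2)^(2/m)) := by nlinarith
          have hq : deriv f y / deriv f (y/2) ≤ ((L+1) * (2*(y/2)^(2/m))) / (L/2 * (y/2)^(2/m)) :=
            div_le_div₀ (by positivity) hstep (by positivity) h2.le
          have heqq : ((L+1) * (2*(y/2)^(2/m))) / (L/2 * (y/2)^(2/m)) = 4*(L+1)/L := by
            field_simp; ring
          rw [heqq] at hq
          exact hq
        · refine le_trans ?_ (le_trans (le_max_right _ _) (le_max_right _ _))
          have h1 : deriv f y ≤ deriv f (2*M) := hmono (by linarith)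
          have h2 : deriv f (δ/2) ≤ deriv f (y/2) := hmono (by linarith)
          exact div_le_div₀ (hd_nonneg _ (by linarith)) h1 (hpos _ (by linarith)) h2
    linarith [key, le_max_left (6:ℝ) (max (4*(L+1)/L) (deriv f (2*M) / deriv f (δ/2)))]
  · -- term 2
    refine le_trans ?_ (le_trans (le_max_left _ _) (le_max_right _ _))
    rw [hC2]
    rcases le_or_gt y δ with hyδ | hyδ
    · refine le_trans ?_ (le_max_left _ _)
      have := (hδ' y hy hyδ).2
      rw [div_le_iff₀ hy]; linarith
    · rcases le_or_gt M y with hyM | hyM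
      · refine le_trans ?_ (le_trans (le_max_left _ _) (le_max_right _ _))
        have h1 := (hM y hyM).2
        have hy1 : (1:ℝ) ≤ y := le_trans hM1 hyM
        have h2 : y ^ (2/m) ≤ y := by
          calc y^(2/m) ≤ y^(1:ℝ) := Real.rpow_le_rpow_of_exponent_le hy1 hexp1
            _ = y := Real.rpow_one y
        rw [div_le_iff₀ hy]
        nlinarith
      · refine le_trans ?_ (le_trans (le_max_right _ _) (le_max_right _ _))
        exact div_le_div₀ (hd_nonneg _ hM0.le) (hmono hyM.le) hδ0 hyδ.le
  · -- term 3
    refine le_trans ?_ (le_trans (le_max_right _ _) (le_max_right _ _))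
    rw [hC3]
    have hden : (0:ℝ) < 1 + y^(2/m) := by positivity
    rcases le_or_gt y M with hyM | hyM
    · refine le_trans ?_ (le_max_left _ _)
      calc deriv f y / (1 + y^(2/m)) ≤ deriv f y / 1 :=
            div_le_div_of_nonneg_left (hd_nonneg y hy.le) one_pos (le_add_of_nonneg_right (Real.rpow_nonneg hy.le _))
        _ = deriv f y := div_one _
        _ ≤ deriv f M := hmono hyM
    · refine le_trans ?_ (le_max_right _ _)
      have h1 := (hM y hyM.le).2
      rw [div_le_iff₀ hden]
      have : (0:ℝ) ≤ y ^ (2/m) := Real.rpow_nonneg hy.le _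
      nlinarith

lemma tangent_le (φ : ℝ → ℝ) (hdiff : Differentiable ℝ φ) (hconv : ConvexOn ℝ Set.univ φ)
    (a b : ℝ) : φ a + deriv φ a * (b - a) ≤ φ b := by
  rcases lt_trichotomy a b with h | h | h
  · have h2 := hconv.deriv_le_slope (mem_univ a) (mem_univ b) h (hdiff a)
    rw [slope_def_field, le_div_iff₀ (by linarith)] at h2
    linarith
  · simp [h]
  · have h2 := hconv.slope_le_deriv (mem_univ b) (mem_univ a) h (hdiff a)
    rw [slope_def_field, div_le_iff₀ (by linarith)] at h2
    linarith

lemma slope0_tendsto (φ : ℝ → ℝ) (hd2 : Differentiable ℝ (deriv φ)) (hφ'0 : deriv φ 0 = 0) :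
    Tendsto (fun y => deriv φ y / y) (𝓝[≠] (0:ℝ)) (𝓝 (deriv (deriv φ) 0)) := by
  have h := (hd2 0).hasDerivAt
  rw [hasDerivAt_iff_tendsto_slope] at h
  refine h.congr' ?_
  filter_upwards [self_mem_nhdsWithin] with y hy
  rw [slope_def_field, hφ'0]
  simp

lemma neg_tendsto_pos : Tendsto (fun t : ℝ => -t) (𝓝[>] (0:ℝ)) (𝓝[≠] (0:ℝ)) := by
  rw [tendsto_nhdsWithin_iff]
  constructor
  · have : Tendsto (fun t : ℝ => -t) (𝓝 (0:ℝ)) (𝓝 (-0:ℝ)) := tendsto_neg _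
    rw [neg_zero] at this
    exact this.mono_left nhdsWithin_le_nhds
  · filter_upwards [self_mem_nhdsWithin] with t ht
    simp only [mem_compl_iff, mem_singleton_iff, neg_eq_zero]
    exact ne_of_gt ht

lemma fderiv_w (d : ℕ) (β γ : Fin d → ℝ) (φ : ℝ → ℝ) (hdiff : Differentiable ℝ φ)
    (x : Fin d → ℝ) (i : Fin d) :
    fderiv ℝ (fun x : Fin d → ℝ => ∑ j, β j * φ (γ j * x j)) x (Pi.single i 1)
      = β i * γ i * deriv φ (γ i * x i) := by
  have hj : ∀ j : Fin d, HasFDerivAt (fun x : Fin d → ℝ => β j * φ (γ j * x j))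
      ((β j) • ((deriv φ (γ j * x j)) • ((γ j) • (ContinuousLinearMap.proj j : (Fin d → ℝ) →L[ℝ] ℝ)))) x := by
    intro j
    have hlin : HasFDerivAt (fun x : Fin d → ℝ => γ j * x j)
        ((γ j) • (ContinuousLinearMap.proj j : (Fin d → ℝ) →L[ℝ] ℝ)) x := by
      have h0 := ((γ j) • (ContinuousLinearMap.proj j : (Fin d → ℝ) →L[ℝ] ℝ)).hasFDerivAt (x := x)
      have heq : ⇑((γ j) • (ContinuousLinearMap.proj j : (Fin d → ℝ) →L[ℝ] ℝ))
          = fun x : Fin d → ℝ => γ j * x j := by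
        ext x; simp
      rw [heq] at h0
      exact h0
    have hφ : HasDerivAt φ (deriv φ (γ j * x j)) (γ j * x j) := (hdiff _).hasDerivAt
    have hcomp := hφ.comp_hasFDerivAt x hlin
    exact hcomp.const_mul (β j)
  have hw : HasFDerivAt (fun x : Fin d → ℝ => ∑ j, β j * φ (γ j * x j))
      (∑ j, (β j) • ((deriv φ (γ j * x j)) • ((γ j) • (ContinuousLinearMap.proj j : (Fin d → ℝ) →L[ℝ] ℝ)))) x :=
    HasFDerivAt.fun_sum (fun j _ => hj j)
  rw [hw.fderiv]
  simp only [ContinuousLinearMap.coe_sum', Finset.sum_apply, ContinuousLinearMap.coe_smul',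
    Pi.smul_apply, ContinuousLinearMap.proj_apply, smul_eq_mul]
  rw [Finset.sum_eq_single i]
  · simp; ring
  · intro b _ hb
    simp [Pi.single_apply, hb]
  · simp

/-- Derivative-ratio bounds for the separable solution of the reduced multidimensional
first corrector equation. -/
theorem stmt6 (d : ℕ) (hd : 1 ≤ d) (m : ℝ) (hm : 2 < m) (β γ : Fin d → ℝ)
    (hβ : ∀ j, 0 < β j) (hγ : ∀ j, 0 < γ j) (φ : ℝ → ℝ)
    (hC2 : ContDiff ℝ 2 φ) (hconv : ConvexOn ℝ Set.univ φ)
    (hφ0 : φ 0 = 0) (hφ'0 : deriv φ 0 = 0) (hφ''0 : 0 < deriv (deriv φ) 0)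
    (htop : Tendsto (fun x => deriv φ x / x ^ (2 / m)) atTop
      (𝓝 (m * (m - 1) ^ (1 / m - 1))))
    (hbot : Tendsto (fun x => deriv φ x / |x| ^ (2 / m)) atBot
      (𝓝 (-(m * (m - 1) ^ (1 / m - 1))))) :
    let w : (Fin d → ℝ) → ℝ := fun x => ∑ j, β j * φ (γ j * x j)
    ∃ C : ℝ, ∀ (i : Fin d) (x : Fin d → ℝ), x ≠ 0 →
      |x i * fderiv ℝ w x (Pi.single i 1)| / w x
        + |fderiv ℝ w x (Pi.single i 1)| / Real.sqrt (∑ k, x k ^ 2)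
        + |fderiv ℝ w x (Pi.single i 1)| / (1 + Real.sqrt (∑ k, x k ^ 2) ^ (2 / m)) ≤ C := by
  intro w
  -- basic differentiability
  have h2 : ContDiff ℝ ((1+1:ℕ) : WithTop ℕ∞) φ := by exact_mod_cast hC2
  rw [show ((1+1:ℕ) : WithTop ℕ∞) = (1:WithTop ℕ∞)+1 by norm_num] at h2
  have hsucc := contDiff_succ_iff_deriv.mp h2
  have hdiff : Differentiable ℝ φ := hsucc.1
  have hd2 : Differentiable ℝ (deriv φ) := hsucc.2.2.differentiable one_ne_zero
  set c : ℝ := deriv (deriv φ) 0 with hc_def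
  set L : ℝ := m * (m - 1) ^ (1 / m - 1) with hL_def
  have hL : 0 < L := mul_pos (by linarith) (Real.rpow_pos_of_pos (by linarith) _)
  have hmono : Monotone (deriv φ) := by
    have := hconv.monotoneOn_deriv (fun x _ => hdiff x)
    intro a b hab
    exact this (mem_univ a) (mem_univ b) hab
  have hφnn : ∀ y, 0 ≤ φ y := by
    intro y
    have := tangent_le φ hdiff hconv 0 y
    rw [hφ0, hφ'0] at this
    linarith
  -- ψ := reflection of φ
  set ψ : ℝ → ℝ := fun t => φ (-t) with hψ_def
  have hderψ : ∀ t, deriv ψ t = -deriv φ (-t) := by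
    intro t
    exact deriv_comp_neg φ t
  have hmonoψ : Monotone (deriv ψ) := by
    intro a b hab
    rw [hderψ, hderψ]
    exact neg_le_neg (hmono (by linarith))
  have hψ'0 : deriv ψ 0 = 0 := by rw [hderψ]; simp [hφ'0]
  have hψnn : ∀ y, 0 ≤ ψ y := fun y => hφnn (-y)
  have htangφ : ∀ y : ℝ, 0 < y → φ (y/2) + deriv φ (y/2) * (y/2) ≤ φ y := by
    intro y hy
    have ht := tangent_le φ hdiff hconv (y/2) y
    have he : deriv φ (y/2) * (y - y/2) = deriv φ (y/2) * (y/2) := by ring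
    linarith [ht, he.ge, he.le]
  have htangψ : ∀ y : ℝ, 0 < y → ψ (y/2) + deriv ψ (y/2) * (y/2) ≤ ψ y := by
    intro y hy
    have ht := tangent_le φ hdiff hconv (-(y/2)) (-y)
    have he : deriv φ (-(y/2)) * (-y - -(y/2)) = -deriv φ (-(y/2)) * (y/2) := by ring
    rw [hψ_def]
    simp only [hderψ, deriv_comp_neg]
    linarith [ht, he.ge, he.le]
  have hsl0 := slope0_tendsto φ hd2 hφ'0
  have hslφ : Tendsto (fun y => deriv φ y / y) (𝓝[>] (0:ℝ)) (𝓝 c) :=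
    hsl0.mono_left (nhdsWithin_mono 0 (fun y hy => ne_of_gt hy))
  have hslψ : Tendsto (fun y => deriv ψ y / y) (𝓝[>] (0:ℝ)) (𝓝 c) := by
    have h1 := hsl0.comp neg_tendsto_pos
    refine h1.congr ?_
    intro y
    simp only [Function.comp]
    rw [hderψ, neg_div, div_neg]
  have htopψ : Tendsto (fun y => deriv ψ y / y ^ (2/m)) atTop (𝓝 L) := by
    have h1 := (hbot.comp tendsto_neg_atTop_atBot).neg
    rw [neg_neg] at h1
    refine h1.congr' ?_
    filter_upwards [eventually_gt_atTop (0:ℝ)] with y hy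
    simp only [Function.comp]
    rw [hderψ, abs_neg, abs_of_pos hy, neg_div]
  obtain ⟨Cp, hCp0, hp⟩ := posHalf m c L hm hφ''0 hL φ hmono hφ'0 hφnn htangφ hslφ htop
  obtain ⟨Cn, hCn0, hn⟩ := posHalf m c L hm hφ''0 hL ψ hmonoψ hψ'0 hψnn htangψ hslψ htopψ
  set Call : ℝ := max Cp Cn with hCall_def
  have hCall0 : 0 ≤ Call := le_trans hCp0 (le_max_left _ _)
  -- positivity of φ away from 0
  have hφpos : ∀ y : ℝ, y ≠ 0 → 0 < φ y := by
    intro y hy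
    rcases lt_or_gt_of_ne hy with h | h
    · have := (hn (-y) (by linarith)).1
      simpa [hψ_def] using this
    · exact (hp y h).1
  -- the combined 1-D bounds
  have hQ : ∀ y : ℝ, y ≠ 0 →
      |y * deriv φ y| / φ y ≤ Call ∧ |deriv φ y| / |y| ≤ Call ∧
        |deriv φ y| / (1 + |y| ^ (2/m)) ≤ Call := by
    intro y hy0
    rcases lt_or_gt_of_ne hy0 with hneg | hpos
    · set z := -y with hz
      have hz0 : 0 < z := by rw [hz]; linarith
      obtain ⟨hψp, hψd, b1, b2, b3⟩ := hn z hz0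
      have e1 : ψ z = φ y := by rw [hψ_def]; simp [hz]
      have e2 : deriv φ y = -deriv ψ z := by rw [hderψ]; simp [hz]
      have e3 : |y| = z := by rw [hz]; rw [abs_of_neg hneg]
      have e4 : |deriv φ y| = deriv ψ z := by
        rw [e2, abs_neg, abs_of_pos hψd]
      refine ⟨?_, ?_, ?_⟩
      · have hprod : y * deriv φ y = z * deriv ψ z := by rw [e2, hz]; ring
        have hnn : 0 ≤ y * deriv φ y := by
          rw [hprod]; exact (mul_pos hz0 hψd).le
        rw [abs_of_nonneg hnn, hprod, ← e1]
        exact le_trans b1 (le_max_right _ _)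
      · rw [e4, e3]
        exact le_trans b2 (le_max_right _ _)
      · rw [e4, e3]
        exact le_trans b3 (le_max_right _ _)
    · obtain ⟨hφp, hφd, b1, b2, b3⟩ := hp y hpos
      have e4 : |deriv φ y| = deriv φ y := abs_of_pos hφd
      have e3 : |y| = y := abs_of_pos hpos
      refine ⟨?_, ?_, ?_⟩
      · rw [abs_of_nonneg (by positivity : (0:ℝ) ≤ y * deriv φ y)]
        exact le_trans b1 (le_max_left _ _)
      · rw [e4, e3]
        exact le_trans b2 (le_max_left _ _)
      · rw [e4, e3]
        exact le_trans b3 (le_max_left _ _)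
  -- the uniform constant
  have hexp0 : 0 < 2/m := by positivity
  obtain ⟨C, hC⟩ := Finite.exists_le (fun i : Fin d =>
    Call + β i * γ i * γ i * Call + β i * γ i * (max 1 (γ i ^ (2/m))) * Call)
  refine ⟨C, ?_⟩
  intro i x hx
  rw [show w = fun x => ∑ j, β j * φ (γ j * x j) from rfl]
  rw [fderiv_w d β γ φ hdiff x i]
  obtain ⟨j, hj⟩ := Function.ne_iff.mp hx
  set s : ℝ := Real.sqrt (∑ k, x k ^ 2) with hs_def
  have hxj : x j ≠ 0 := by simpa using hj
  have hs0 : 0 < s := by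
    rw [hs_def]
    apply Real.sqrt_pos.mpr
    apply Finset.sum_pos' (fun k _ => sq_nonneg _) ⟨j, Finset.mem_univ j, by positivity⟩
  have hsi : |x i| ≤ s := by
    rw [hs_def, ← Real.sqrt_sq_eq_abs]
    apply Real.sqrt_le_sqrt
    exact Finset.single_le_sum (fun k _ => sq_nonneg (x k)) (Finset.mem_univ i)
  have hwpos : 0 < ∑ j, β j * φ (γ j * x j) := by
    apply Finset.sum_pos' (fun k _ => mul_nonneg (hβ k).le (hφnn _))
    exact ⟨j, Finset.mem_univ j, mul_pos (hβ j)
      (hφpos _ (mul_ne_zero (ne_of_gt (hγ j)) hxj))⟩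
  set y : ℝ := γ i * x i with hy_def
  set A : ℝ := deriv φ y with hA_def
  have habs : |β i * γ i * A| = β i * γ i * |A| := by
    rw [abs_mul, abs_mul, abs_of_pos (hβ i), abs_of_pos (hγ i)]
  -- term 1 bound
  have hT1 : |x i * (β i * γ i * A)| / (∑ j, β j * φ (γ j * x j)) ≤ Call := by
    rcases eq_or_ne (x i) 0 with hxi | hxi
    · rw [hxi]
      simp only [zero_mul, abs_zero, zero_div]
      exact hCall0
    · have hy0 : y ≠ 0 := mul_ne_zero (ne_of_gt (hγ i)) hxi
      have hφy : 0 < φ y := hφpos y hy0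
      have hnum : |x i * (β i * γ i * A)| = β i * |y * A| := by
        rw [show x i * (β i * γ i * A) = β i * ((γ i * x i) * A) by ring, abs_mul,
          abs_of_pos (hβ i), ← hy_def]
      rw [hnum]
      have hwge : β i * φ y ≤ ∑ j, β j * φ (γ j * x j) := by
        rw [hy_def]
        exact Finset.single_le_sum (f := fun k => β k * φ (γ k * x k))
          (fun k _ => mul_nonneg (hβ k).le (hφnn _)) (Finset.mem_univ i)
      have step1 : β i * |y * A| / (∑ j, β j * φ (γ j * x j)) ≤ β i * |y * A| / (β i * φ y) :=
        div_le_div_of_nonneg_left (mul_nonneg (hβ i).le (abs_nonneg _))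
          (mul_pos (hβ i) hφy) hwge
      have step2 : β i * |y * A| / (β i * φ y) = |y * A| / φ y := by
        rw [mul_div_mul_left _ _ (ne_of_gt (hβ i))]
      rw [step2] at step1
      exact le_trans step1 (hQ y hy0).1
  -- term 2 bound
  have hT2 : |β i * γ i * A| / s ≤ β i * γ i * γ i * Call := by
    rcases eq_or_ne (x i) 0 with hxi | hxi
    · have : A = 0 := by rw [hA_def, hy_def, hxi, mul_zero, hφ'0]
      rw [this]
      simp only [mul_zero, abs_zero, zero_div]
      exact mul_nonneg (mul_nonneg (mul_nonneg (hβ i).le (hγ i).le) (hγ i).le) hCall0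
    · have hy0 : y ≠ 0 := mul_ne_zero (ne_of_gt (hγ i)) hxi
      have hxi0 : 0 < |x i| := abs_pos.mpr hxi
      rw [habs]
      have step1 : β i * γ i * |A| / s ≤ β i * γ i * |A| / |x i| :=
        div_le_div_of_nonneg_left (mul_nonneg (mul_nonneg (hβ i).le (hγ i).le) (abs_nonneg _))
          hxi0 hsi
      have hyabs : |y| = γ i * |x i| := by
        rw [hy_def, abs_mul, abs_of_pos (hγ i)]
      have step2 : β i * γ i * |A| / |x i| = β i * γ i * γ i * (|A| / |y|) := by
        rw [hyabs, mul_comm (γ i) (|x i|), ← div_div]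
        field_simp [(hγ i).ne']
      rw [step2] at step1
      refine le_trans step1 ?_
      exact mul_le_mul_of_nonneg_left (hQ y hy0).2.1
        (mul_nonneg (mul_nonneg (hβ i).le (hγ i).le) (hγ i).le)
  -- term 3 bound
  have hT3 : |β i * γ i * A| / (1 + s ^ (2/m)) ≤ β i * γ i * (max 1 (γ i ^ (2/m))) * Call := by
    have hsp : (0:ℝ) ≤ s ^ (2/m) := Real.rpow_nonneg hs0.le _
    have hden : (0:ℝ) < 1 + s ^ (2/m) := by linarith
    have hden' : (0:ℝ) < 1 + |y| ^ (2/m) := by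
      have := Real.rpow_nonneg (abs_nonneg y) (2/m)
      linarith
    have hQ3 : |A| / (1 + |y| ^ (2/m)) ≤ Call := by
      rcases eq_or_ne y 0 with hy0 | hy0
      · rw [hA_def, hy0, hφ'0]
        simp only [abs_zero, zero_div]
        exact hCall0
      · exact (hQ y hy0).2.2
    have hA1 : |A| ≤ Call * (1 + |y| ^ (2/m)) := by
      rw [div_le_iff₀ hden'] at hQ3
      linarith
    set K : ℝ := max 1 (γ i ^ (2/m)) with hK_def
    have hK1 : (1:ℝ) ≤ K := le_max_left _ _
    have hK0 : (0:ℝ) < K := by linarith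
    have hyle : |y| ^ (2/m) ≤ K * s ^ (2/m) := by
      have h1 : |y| ^ (2/m) = γ i ^ (2/m) * |x i| ^ (2/m) := by
        rw [hy_def, abs_mul, abs_of_pos (hγ i),
          Real.mul_rpow (hγ i).le (abs_nonneg _)]
      have h2 : |x i| ^ (2/m) ≤ s ^ (2/m) :=
        Real.rpow_le_rpow (abs_nonneg _) hsi (by positivity)
      have h3 : γ i ^ (2/m) ≤ K := le_max_right _ _
      have h4 : (0:ℝ) ≤ γ i ^ (2/m) := Real.rpow_nonneg (hγ i).le _
      have h5 : (0:ℝ) ≤ |x i| ^ (2/m) := Real.rpow_nonneg (abs_nonneg _) _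
      calc |y| ^ (2/m) = γ i ^ (2/m) * |x i| ^ (2/m) := h1
        _ ≤ K * s ^ (2/m) := mul_le_mul h3 h2 h5 (le_trans zero_le_one hK1)
    have hdenle : 1 + |y| ^ (2/m) ≤ K * (1 + s ^ (2/m)) := by
      calc 1 + |y| ^ (2/m) ≤ K + K * s ^ (2/m) := add_le_add hK1 hyle
        _ = K * (1 + s ^ (2/m)) := by ring
    have hA2 : |A| ≤ Call * (K * (1 + s ^ (2/m))) :=
      le_trans hA1 (mul_le_mul_of_nonneg_left hdenle hCall0)
    rw [habs, div_le_iff₀ hden]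
    calc β i * γ i * |A| ≤ β i * γ i * (Call * (K * (1 + s ^ (2/m)))) := by
          apply mul_le_mul_of_nonneg_left hA2 (mul_nonneg (hβ i).le (hγ i).le)
      _ = β i * γ i * K * Call * (1 + s ^ (2/m)) := by ring
  calc |x i * (β i * γ i * A)| / (∑ j, β j * φ (γ j * x j)) + |β i * γ i * A| / s
        + |β i * γ i * A| / (1 + s ^ (2/m))
      ≤ Call + β i * γ i * γ i * Call + β i * γ i * (max 1 (γ i ^ (2/m))) * Call :=
        add_le_add (add_le_add hT1 hT2) hT3
    _ ≤ C := hC i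
end

section
/- In the Black–Scholes setting, let d ≥ 1, μ ∈ ℝ^d, r ∈ ℝ, A := σσ^⊤ positive definite, R ∈ (0,1), q := (μ−r𝟙)^⊤A^{−1}(μ−r𝟙), π := (1/R)A^{−1}(μ−r𝟙), m > 2, m^* := 1/(3m−2), β := 3mm^* − R, λ > 0, T > 0, and let g : [0,T] → (0,∞) be continuous and ḡ : [0,T] → ℝ be differentiable. Set V⁰_w(t,w,s) := g(t)w^{−R}, h⁰(t,w,s) := (π_1 w/s_1, …, π_d w/s_d), Ũ'(y) := −y^{−1/R}, and define u(t,w,s) := λ w^β ḡ(t). Then u satisfies −E₂(t,w,s, ∂_t u, ∂_w u, ∂_s u, ∂²_{ww}u, ∂²_{ws}u, ∂²_{ss}u) = λ g(t) w^β for all (t,w,s) ∈ [0,T]×(0,∞)×(0,∞)^d if and only if ḡ'(t) + ḡ(t)[−β g(t)^{−1/R} + β r + (β/R + β(β−1)/(2R²)) q] = −g(t) for all t ∈ [0,T]. -/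
lemma aux_deriv (lam β c : ℝ) {w : ℝ} (hw : w ≠ 0) :
    deriv (fun ω : ℝ => lam * ω ^ β * c) w = lam * β * w ^ (β - 1) * c := by
  rw [(((Real.hasDerivAt_rpow_const (Or.inl hw)).const_mul lam).mul_const c).deriv]
  ring

lemma aux_deriv2 (lam β c : ℝ) {w : ℝ} (hw : 0 < w) :
    deriv (deriv (fun ω : ℝ => lam * ω ^ β * c)) w
      = lam * β * (β - 1) * w ^ (β - 2) * c := by
  have hev : deriv (fun ω : ℝ => lam * ω ^ β * c)
      =ᶠ[nhds w] fun ω : ℝ => lam * β * ω ^ (β - 1) * c := by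
    filter_upwards [eventually_ne_nhds hw.ne'] with x hx
    exact aux_deriv lam β c hx
  rw [hev.deriv_eq, aux_deriv (lam * β) (β - 1) c hw.ne', show β - 1 - 1 = β - 2 by ring]

open Matrix in
lemma aux_mat {d : ℕ} (A : Matrix (Fin d) (Fin d) ℝ) (hA : IsUnit A.det) (b : Fin d → ℝ) :
    ∑ i, ∑ j, (∑ k, A⁻¹ i k * b k) * A i j * (∑ l, A⁻¹ j l * b l)
      = ∑ i, ∑ j, b i * A⁻¹ i j * b j := by
  have hAv : ∀ i, ∑ j, A i j * (∑ l, A⁻¹ j l * b l) = b i := by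
    intro i
    have h : A *ᵥ (A⁻¹ *ᵥ b) = b := by
      rw [Matrix.mulVec_mulVec, Matrix.mul_nonsing_inv A hA, Matrix.one_mulVec]
    have := congrFun h i
    simpa [Matrix.mulVec, dotProduct] using this
  calc ∑ i, ∑ j, (∑ k, A⁻¹ i k * b k) * A i j * (∑ l, A⁻¹ j l * b l)
      = ∑ i, (∑ k, A⁻¹ i k * b k) * ∑ j, A i j * (∑ l, A⁻¹ j l * b l) := by
        refine Finset.sum_congr rfl fun i _ => ?_
        rw [Finset.mul_sum]
        exact Finset.sum_congr rfl fun j _ => by ring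
    _ = ∑ i, (∑ k, A⁻¹ i k * b k) * b i := by simp [hAv]
    _ = ∑ i, ∑ j, b i * A⁻¹ i j * b j := by
        refine Finset.sum_congr rfl fun i _ => ?_
        rw [Finset.sum_mul]
        exact Finset.sum_congr rfl fun j _ => by ring


/-- In the Black–Scholes example, the candidate `u(t,w,s) = λ w^β ḡ(t)` solves the second
corrector equation `−E₂(u) = λ g(t) w^β` if and only if `ḡ` solves the associated linear ODE. -/
theorem stmt7 (d : ℕ) (hd : 1 ≤ d) (μ : Fin d → ℝ) (r : ℝ)
    (A : Matrix (Fin d) (Fin d) ℝ) (hA : A.PosDef)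
    (R m lam T : ℝ) (hR : R ∈ Set.Ioo (0 : ℝ) 1) (hm : 2 < m)
    (hlam : 0 < lam) (hT : 0 < T)
    (g gbar : ℝ → ℝ) (hgcont : ContinuousOn g (Set.Icc 0 T))
    (hgpos : ∀ t ∈ Set.Icc (0 : ℝ) T, 0 < g t)
    (hgbar : Differentiable ℝ gbar) :
    let mstar : ℝ := 1 / (3 * m - 2)
    let β : ℝ := 3 * m * mstar - R
    let q : ℝ := ∑ i, ∑ j, (μ i - r) * A⁻¹ i j * (μ j - r)
    let piv : Fin d → ℝ := fun i => (1 / R) * ∑ j, A⁻¹ i j * (μ j - r)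
    let u : ℝ → ℝ → (Fin d → ℝ) → ℝ := fun t w _ => lam * w ^ β * gbar t
    let h0 : ℝ → (Fin d → ℝ) → Fin d → ℝ := fun w s i => piv i * w / s i
    ((∀ t ∈ Set.Icc (0 : ℝ) T, ∀ w : ℝ, 0 < w → ∀ s : Fin d → ℝ, (∀ i, 0 < s i) →
        -(deriv (fun ω => u t ω s) w * (∑ i, h0 w s i * s i * (μ i - r))
          + (∑ i, ∑ j, (deriv (fun ω => fderiv ℝ (fun σ => u t ω σ) s (Pi.single i 1)) w
              * s i * h0 w s i) * A i j * s j)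
          + deriv (deriv (fun ω => u t ω s)) w / 2 *
              (∑ i, ∑ j, (h0 w s i * s i) * A i j * (h0 w s j * s j))
          + deriv (fun τ => u τ w s) t
          + (∑ i, fderiv ℝ (fun σ => u t w σ) s (Pi.single i 1) * s i * μ i)
          + r * w * deriv (fun ω => u t ω s) w
          + (1 / 2) * ∑ i, ∑ j, A i j * s i * s j *
              fderiv ℝ (fun σ => fderiv ℝ (fun σ' => u t w σ') σ (Pi.single j 1)) s
                (Pi.single i 1)
          + (-((g t * w ^ (-R)) ^ (-(1 / R)))) * deriv (fun ω => u t ω s) w)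
        = lam * g t * w ^ β)
      ↔
      (∀ t ∈ Set.Icc (0 : ℝ) T,
        deriv gbar t + gbar t * (-(β * g t ^ (-(1 / R))) + β * r
          + (β / R + β * (β - 1) / (2 * R ^ 2)) * q) = -(g t))) := by
  intro mstar β q piv u h0
  have hRne : R ≠ 0 := hR.1.ne'
  have hAdet : IsUnit A.det := isUnit_iff_ne_zero.mpr hA.det_pos.ne'
  have key : ∀ t ∈ Set.Icc (0 : ℝ) T, ∀ w : ℝ, 0 < w → ∀ s : Fin d → ℝ, (∀ i, 0 < s i) →
      ((-(deriv (fun ω => u t ω s) w * (∑ i, h0 w s i * s i * (μ i - r))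
          + (∑ i, ∑ j, (deriv (fun ω => fderiv ℝ (fun σ => u t ω σ) s (Pi.single i 1)) w
              * s i * h0 w s i) * A i j * s j)
          + deriv (deriv (fun ω => u t ω s)) w / 2 *
              (∑ i, ∑ j, (h0 w s i * s i) * A i j * (h0 w s j * s j))
          + deriv (fun τ => u τ w s) t
          + (∑ i, fderiv ℝ (fun σ => u t w σ) s (Pi.single i 1) * s i * μ i)
          + r * w * deriv (fun ω => u t ω s) w
          + (1 / 2) * ∑ i, ∑ j, A i j * s i * s j *
              fderiv ℝ (fun σ => fderiv ℝ (fun σ' => u t w σ') σ (Pi.single j 1)) s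
                (Pi.single i 1)
          + (-((g t * w ^ (-R)) ^ (-(1 / R)))) * deriv (fun ω => u t ω s) w)
        = lam * g t * w ^ β)
      ↔ (deriv gbar t + gbar t * (-(β * g t ^ (-(1 / R))) + β * r
          + (β / R + β * (β - 1) / (2 * R ^ 2)) * q) = -(g t))) := by
    intro t ht w hw s hs
    have hgt := hgpos t ht
    simp only [u, h0]
    rw [aux_deriv lam β (gbar t) hw.ne', aux_deriv2 lam β (gbar t) hw]
    simp only [fderiv_fun_const, Pi.zero_apply, ContinuousLinearMap.zero_apply, deriv_const,
      zero_mul, mul_zero, Finset.sum_const_zero, add_zero, zero_add]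
    rw [deriv_const_mul _ (hgbar t)]
    have hc : ∀ i, piv i * w / s i * s i = piv i * w := fun i =>
      div_mul_cancel₀ _ (hs i).ne'
    simp only [hc]
    have hS1 : ∑ i, piv i * w * (μ i - r) = w / R * q := by
      simp only [piv, q, Finset.mul_sum]
      refine Finset.sum_congr rfl fun i _ => ?_
      rw [Finset.sum_mul, Finset.sum_mul]
      exact Finset.sum_congr rfl fun j _ => by ring
    have hS2 : ∑ i, ∑ j, piv i * w * A i j * (piv j * w) = w * w / R ^ 2 * q := by
      have keym := aux_mat A hAdet (fun k => μ k - r)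
      calc ∑ i, ∑ j, piv i * w * A i j * (piv j * w)
          = ∑ i, ∑ j, w * w / R ^ 2 *
              ((∑ k, A⁻¹ i k * (μ k - r)) * A i j * (∑ l, A⁻¹ j l * (μ l - r))) := by
            refine Finset.sum_congr rfl fun i _ => Finset.sum_congr rfl fun j _ => ?_
            simp only [piv]
            field_simp
        _ = w * w / R ^ 2 * q := by
            simp only [← Finset.mul_sum]
            rw [keym]
    rw [hS1, hS2]
    have hpow : (g t * w ^ (-R)) ^ (-(1 / R)) = g t ^ (-(1 / R)) * w := by
      rw [Real.mul_rpow hgt.le (Real.rpow_nonneg hw.le _), ← Real.rpow_mul hw.le,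
        show -R * -(1 / R) = 1 by field_simp, Real.rpow_one]
    rw [hpow]
    have e1 : w ^ (β - 1) = w ^ β / w := by rw [Real.rpow_sub hw, Real.rpow_one]
    have e2 : w ^ (β - 2) = w ^ β / (w * w) := by
      rw [Real.rpow_sub hw, show (2 : ℝ) = (1 : ℝ) + 1 by norm_num, Real.rpow_add hw,
        Real.rpow_one]
    have hfac : lam * β * w ^ (β - 1) * gbar t * (w / R * q)
          + lam * β * (β - 1) * w ^ (β - 2) * gbar t / 2 * (w * w / R ^ 2 * q)
          + lam * w ^ β * deriv gbar t
          + r * w * (lam * β * w ^ (β - 1) * gbar t)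
          + -(g t ^ (-(1 / R)) * w) * (lam * β * w ^ (β - 1) * gbar t)
        = lam * w ^ β * (deriv gbar t + gbar t * (-(β * g t ^ (-(1 / R))) + β * r
            + (β / R + β * (β - 1) / (2 * R ^ 2)) * q)) := by
      rw [e1, e2]
      field_simp
      ring
    rw [hfac]
    have hne : lam * w ^ β ≠ 0 := by positivity
    constructor
    · intro hh
      have h2 : lam * w ^ β * (deriv gbar t + gbar t * (-(β * g t ^ (-(1 / R))) + β * r
            + (β / R + β * (β - 1) / (2 * R ^ 2)) * q))
          = lam * w ^ β * (-(g t)) := by linear_combination -hh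
      exact mul_left_cancel₀ hne h2
    · intro hh
      rw [hh]
      ring
  constructor
  · intro h t ht
    exact (key t ht 1 one_pos (fun _ => 1) (fun _ => one_pos)).mp
      (h t ht 1 one_pos (fun _ => 1) (fun _ => one_pos))
  · intro h t ht w hw s hs
    exact (key t ht w hw s hs).mpr (h t ht)
end

section
/- Let d ≥ 1, m > 2, m^* := 1/(3m−2), R ∈ (0,1), κ > 0, T > 0, λ ∈ ℝ, let μ ∈ ℝ^d, r ∈ ℝ, let A := σσ^⊤ be positive definite with square root 𝔖 := A^{1/2}, set π := (1/R)A^{−1}(μ−r𝟙), and let g : [0,T] → (0,∞) be continuous. Let Σ be the d×d matrix whose i-th column is π_i R 𝔖(π − e_i). Suppose ϖ̃ : ℝ^d → ℝ is twice continuously differentiable and satisfies (R/2)|x|² − (1/m) Σ_{j=1}^d κ^{1−m} |∂_j ϖ̃(x)|^m + (1/(2R²)) Tr(D²ϖ̃(x) (Σ𝔖)^⊤(Σ𝔖)) = λ for every x ∈ ℝ^d. Define ϖ(t,w,s,ξ) := g(t) w^{1−R+4m^*} ϖ̃(w^{−1−m^*} 𝔖(ξ×s)) and a(t,w,s) :=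 λ g(t) w^{3mm^*−R}. Then for every (t,w,s,ξ) ∈ [0,T]×(0,∞)×(0,∞)^d×ℝ^d: (R g(t) w^{−R−1}/2) |𝔖(ξ×s)|² − (g(t)w^{−R})^{1−m} Φ(s, −∇_ξ ϖ(t,w,s,ξ)) + (1/2) Σ_{i,j=1}^d c^{h⁰}_{ij}(w,s) ∂²_{ξ_i ξ_j} ϖ(t,w,s,ξ) = a(t,w,s). -/
open Finset

section aux
variable {d : ℕ}

lemma aux_sum_single (v : Fin d → ℝ) : ∑ k, v k • (Pi.single k 1 : Fin d → ℝ) = v := by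
  rw [← Finset.univ_sum_single v]
  exact Finset.sum_congr rfl fun k _ => by
    ext i; by_cases h : k = i <;> simp [Pi.single_apply, h]

lemma aux_fderiv_apply (f : (Fin d → ℝ) → ℝ) (y : Fin d → ℝ) (v : Fin d → ℝ) :
    fderiv ℝ f y v = ∑ k, v k * fderiv ℝ f y (Pi.single k 1) := by
  conv_lhs => rw [← aux_sum_single v]
  rw [map_sum]
  exact Finset.sum_congr rfl fun k _ => by rw [map_smul]; rfl

lemma aux_comp (f : (Fin d → ℝ) → ℝ) (hf : Differentiable ℝ f) (K : ℝ)
    (L : (Fin d → ℝ) →L[ℝ] (Fin d → ℝ)) (ξ : Fin d → ℝ) :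
    fderiv ℝ (fun x => K * f (L x)) ξ = K • ((fderiv ℝ f (L ξ)).comp L) := by
  have h1 : DifferentiableAt ℝ (fun y => f (L y)) ξ := (hf (L ξ)).comp ξ L.differentiableAt
  rw [fderiv_const_mul h1 K]
  congr 1
  rw [show (fun y => f (L y)) = f ∘ L from rfl,
    fderiv_comp ξ (hf (L ξ)) L.differentiableAt, L.fderiv]

lemma aux_trace (P Q : Matrix (Fin d) (Fin d) ℝ) :
    ∑ i, ∑ j, P i j * Q i j = Matrix.trace (P.transpose * Q) := by
  rw [Matrix.trace]
  simp only [Matrix.diag_apply, Matrix.mul_apply, Matrix.transpose_apply]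
  rw [Finset.sum_comm]

end aux

/-- Factorization of the first corrector equation in the Black–Scholes example: if `ϖ̃` solves
the reduced equation, then `ϖ(t,w,s,ξ) = g(t) w^{1−R+4m*} ϖ̃(w^{−1−m*}𝔖(ξ×s))` together with
`a(t,w,s) = λ g(t) w^{3mm*−R}` solves the first corrector equation. -/
theorem stmt13 (d : ℕ) (hd : 1 ≤ d) (m R κ T lam r : ℝ) (hm : 2 < m)
    (hR : R ∈ Set.Ioo (0 : ℝ) 1) (hκ : 0 < κ) (hT : 0 < T)
    (μ : Fin d → ℝ)
    (S : Matrix (Fin d) (Fin d) ℝ) (hS : S.PosDef)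
    (g : ℝ → ℝ) (hg : ContinuousOn g (Set.Icc 0 T))
    (hgpos : ∀ t ∈ Set.Icc (0 : ℝ) T, 0 < g t)
    (tw : (Fin d → ℝ) → ℝ) (htw : ContDiff ℝ 2 tw) :
    let mstar : ℝ := 1 / (3 * m - 2)
    let A : Matrix (Fin d) (Fin d) ℝ := S * S
    let piv : Fin d → ℝ := fun i => (1 / R) * ∑ j, A⁻¹ i j * (μ j - r)
    let Sig : Matrix (Fin d) (Fin d) ℝ :=
      Matrix.of fun k i => piv i * R *
        (S.mulVec (fun l => piv l - (Pi.single i 1 : Fin d → ℝ) l)) k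
    let M : Matrix (Fin d) (Fin d) ℝ := (Sig * S).transpose * (Sig * S)
    let D1 : ((Fin d → ℝ) → ℝ) → (Fin d → ℝ) → Fin d → ℝ :=
      fun f x j => fderiv ℝ f x (Pi.single j 1)
    (∀ x : Fin d → ℝ,
      R / 2 * (∑ i, x i ^ 2) - (1 / m) * (∑ j, κ ^ (1 - m) * |D1 tw x j| ^ m)
        + (1 / (2 * R ^ 2)) * ∑ i, ∑ j, D1 (fun y => D1 tw y j) x i * M j i = lam) →
    let Φ : (Fin d → ℝ) → (Fin d → ℝ) → ℝ := fun s x =>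
      (1 / (m * κ ^ (m - 1))) * ∑ j, |S⁻¹.mulVec (fun i => x i / s i) j| ^ m
    let ch0 : ℝ → (Fin d → ℝ) → Fin d → Fin d → ℝ := fun w s i j =>
      w ^ 2 * piv i * piv j / (R ^ 2 * s i * s j) *
        ∑ k, ∑ l, (μ k - r - R * A k i) * A⁻¹ k l * (μ l - r - R * A l j)
    let vpi : ℝ → ℝ → (Fin d → ℝ) → (Fin d → ℝ) → ℝ := fun t w s ξ =>
      g t * w ^ (1 - R + 4 * mstar) *
        tw (fun k => w ^ (-(1 + mstar)) * S.mulVec (fun i => ξ i * s i) k)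
    ∀ t ∈ Set.Icc (0 : ℝ) T, ∀ w : ℝ, 0 < w → ∀ s : Fin d → ℝ, (∀ i, 0 < s i) →
      ∀ ξ : Fin d → ℝ,
        R * g t * w ^ (-R - 1) / 2 * (∑ k, S.mulVec (fun i => ξ i * s i) k ^ 2)
          - (g t * w ^ (-R)) ^ (1 - m) * Φ s (fun j => -(D1 (vpi t w s) ξ j))
          + (1 / 2) * ∑ i, ∑ j, ch0 w s i j * D1 (fun ξ' => D1 (vpi t w s) ξ' j) ξ i
        = lam * g t * w ^ (3 * m * mstar - R) := by
  intro mstar A piv Sig Mx D1 hred Φ ch0 vpi t ht w hw s hs ξ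
  obtain ⟨hR0, hR1⟩ := hR
  have hgt : 0 < g t := hgpos t ht
  have hm32 : (0:ℝ) < 3 * m - 2 := by linarith
  have hms : mstar * (3 * m - 2) = 1 := by
    show (1 / (3 * m - 2)) * (3 * m - 2) = 1
    field_simp
  -- basic matrix facts
  have hSsym : ∀ i j, S i j = S j i := by
    intro i j
    have := hS.isHermitian.apply i j
    simpa using this.symm
  have hStr : S.transpose = S := by
    ext i j; exact hSsym j i
  have hSdet : IsUnit S.det := isUnit_iff_ne_zero.mpr hS.det_pos.ne'
  have hSinvS : S⁻¹ * S = 1 := Matrix.nonsing_inv_mul S hSdet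
  have hAdet : IsUnit A.det := by
    show IsUnit (S * S).det
    rw [Matrix.det_mul]; exact hSdet.mul hSdet
  have hAAinv : A * A⁻¹ = 1 := Matrix.mul_nonsing_inv A hAdet
  have hAinvA : A⁻¹ * A = 1 := Matrix.nonsing_inv_mul A hAdet
  -- constants
  set K : ℝ := g t * w ^ (1 - R + 4 * mstar) with hK
  set c : ℝ := w ^ (-(1 + mstar)) with hc
  have hKpos : 0 < K := mul_pos hgt (Real.rpow_pos_of_pos hw _)
  have hcpos : 0 < c := Real.rpow_pos_of_pos hw _
  have hgw : 0 < g t * w ^ (3 * m * mstar - R) :=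
    mul_pos hgt (Real.rpow_pos_of_pos hw _)
  -- the linear map
  set L : (Fin d → ℝ) →L[ℝ] (Fin d → ℝ) :=
    LinearMap.toContinuousLinearMap (c • (Matrix.of fun k i => S k i * s i).mulVecLin) with hLdef
  have hL : ∀ ζ k, L ζ k = c * S.mulVec (fun i => ζ i * s i) k := by
    intro ζ k
    show (c • (Matrix.of fun k i => S k i * s i).mulVecLin) ζ k = _
    simp only [LinearMap.smul_apply, Matrix.mulVecLin_apply, Pi.smul_apply, smul_eq_mul]
    congr 1
    simp only [Matrix.mulVec, dotProduct, Matrix.of_apply]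
    exact Finset.sum_congr rfl fun i _ => by ring
  set y : Fin d → ℝ := L ξ with hy
  have hvpi : vpi t w s = fun ζ => K * tw (L ζ) := by
    funext ζ
    show g t * w ^ (1 - R + 4 * mstar) * tw _ = K * tw (L ζ)
    rw [← hK]
    have : (fun k => w ^ (-(1 + mstar)) * S.mulVec (fun i => ζ i * s i) k) = L ζ := by
      funext k; rw [hL ζ k, ← hc]
    rw [this]
  have htwd : Differentiable ℝ tw := htw.differentiable (by norm_num)
  set f1 : (Fin d → ℝ) → Fin d → ℝ := fun z k => fderiv ℝ tw z (Pi.single k 1) with hf1def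
  have hf1d : ∀ k, Differentiable ℝ (fun z => f1 z k) := by
    intro k
    have h2 : ContDiff ℝ 1 (fderiv ℝ tw) := htw.fderiv_right (by norm_num)
    exact ((ContinuousLinearMap.apply ℝ ℝ (Pi.single k 1 : Fin d → ℝ)).differentiable).comp
      (h2.differentiable one_ne_zero)
  have hD1f : ∀ ζ (v : Fin d → ℝ), fderiv ℝ (vpi t w s) ζ v = K * fderiv ℝ tw (L ζ) (L v) := by
    intro ζ v
    rw [hvpi, aux_comp tw htwd K L ζ]
    simp [smul_eq_mul]
  have hLe : ∀ j k, L (Pi.single j 1) k = c * (s j * S k j) := by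
    intro j k
    rw [hL]
    congr 1
    simp [Matrix.mulVec, dotProduct, Pi.single_apply, mul_ite, ite_mul,
      Finset.sum_ite_eq', mul_comm]
  have hD1e : ∀ ζ j, D1 (vpi t w s) ζ j = (K * c) * (s j * ∑ k, S k j * f1 (L ζ) k) := by
    intro ζ j
    show fderiv ℝ (vpi t w s) ζ (Pi.single j 1) = _
    rw [hD1f, aux_fderiv_apply tw (L ζ) (L (Pi.single j 1)), Finset.mul_sum,
      Finset.mul_sum, Finset.mul_sum]
    exact Finset.sum_congr rfl fun k _ => by rw [hLe]; ring
  have hG : ∀ j, (fun ζ => D1 (vpi t w s) ζ j)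
      = fun ζ => ∑ k, ((K * c) * (s j * S k j)) * f1 (L ζ) k := by
    intro j
    funext ζ
    rw [hD1e ζ j, Finset.mul_sum, Finset.mul_sum]
    exact Finset.sum_congr rfl fun k _ => by ring
  set H : Fin d → Fin d → ℝ := fun l k => fderiv ℝ (fun z => f1 z k) y (Pi.single l 1) with hHdef
  have hD2e : ∀ i j, D1 (fun ζ => D1 (vpi t w s) ζ j) ξ i
      = (K * c * c) * (s i * (s j * ∑ l, S l i * ∑ k, H l k * S k j)) := by
    intro i j
    show fderiv ℝ (fun ζ => D1 (vpi t w s) ζ j) ξ (Pi.single i 1) = _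
    rw [hG j]
    have hdiff : ∀ k : Fin d, DifferentiableAt ℝ (fun ζ => ((K * c) * (s j * S k j)) * f1 (L ζ) k) ξ :=
      fun k => DifferentiableAt.const_mul ((hf1d k (L ξ)).comp ξ L.differentiableAt) _
    rw [fderiv_fun_sum fun k _ => hdiff k]
    rw [ContinuousLinearMap.sum_apply]
    have hterm : ∀ k, fderiv ℝ (fun ζ => ((K * c) * (s j * S k j)) * f1 (L ζ) k) ξ (Pi.single i 1)
        = ((K * c) * (s j * S k j)) * ∑ l, (c * (s i * S l i)) * H l k := by
      intro k
      rw [aux_comp (fun z => f1 z k) (hf1d k) _ L ξ]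
      rw [ContinuousLinearMap.smul_apply, ContinuousLinearMap.coe_comp',
        Function.comp_apply, smul_eq_mul]
      congr 1
      rw [aux_fderiv_apply (fun z => f1 z k) (L ξ) (L (Pi.single i 1))]
      exact Finset.sum_congr rfl fun l _ => by rw [hLe i l]
    calc ∑ k, fderiv ℝ (fun ζ => ((K * c) * (s j * S k j)) * f1 (L ζ) k) ξ (Pi.single i 1)
        = ∑ k, ((K * c) * (s j * S k j)) * ∑ l, (c * (s i * S l i)) * H l k :=
          Finset.sum_congr rfl fun k _ => hterm k
      _ = ∑ k, ∑ l, (K * c * c) * (s i * (s j * (S l i * (H l k * S k j)))) := by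
          refine Finset.sum_congr rfl fun k _ => ?_
          rw [Finset.mul_sum]
          exact Finset.sum_congr rfl fun l _ => by ring
      _ = ∑ l, ∑ k, (K * c * c) * (s i * (s j * (S l i * (H l k * S k j)))) := Finset.sum_comm
      _ = (K * c * c) * (s i * (s j * ∑ l, S l i * ∑ k, H l k * S k j)) := by
          simp only [Finset.mul_sum]
  -- Φ simplification
  have hKc : 0 < K * c := mul_pos hKpos hcpos
  have hmul : ∀ j, S.mulVec (f1 y) j = ∑ k, S k j * f1 y k := by
    intro j
    simp only [Matrix.mulVec, dotProduct]
    exact Finset.sum_congr rfl fun k _ => by rw [hSsym j k]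
  have hxs : (fun i => (-(D1 (vpi t w s) ξ i)) / s i) = fun i => (-(K * c)) * S.mulVec (f1 y) i := by
    funext i
    rw [hD1e ξ i, hmul i, hy, div_eq_iff (hs i).ne']
    ring
  have hSinvapp : ∀ j, S⁻¹.mulVec (fun i => (-(D1 (vpi t w s) ξ i)) / s i) j = (-(K * c)) * f1 y j := by
    intro j
    rw [hxs]
    have h0 : (fun i => (-(K * c)) * S.mulVec (f1 y) i) = (-(K * c)) • S.mulVec (f1 y) := rfl
    rw [h0, Matrix.mulVec_smul, Matrix.mulVec_mulVec, hSinvS, Matrix.one_mulVec]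
    rfl
  have hPhival : Φ s (fun j => -(D1 (vpi t w s) ξ j))
      = (1 / (m * κ ^ (m - 1))) * ((K * c) ^ m * ∑ j, |f1 y j| ^ m) := by
    show (1 / (m * κ ^ (m - 1))) * ∑ j, |S⁻¹.mulVec (fun i => (-(D1 (vpi t w s) ξ i)) / s i) j| ^ m = _
    congr 1
    rw [Finset.mul_sum]
    refine Finset.sum_congr rfl fun j _ => ?_
    rw [hSinvapp j, abs_mul, abs_neg, abs_of_pos hKc, Real.mul_rpow hKc.le (abs_nonneg _)]
  -- term 1
  have hT1 : R * g t * w ^ (-R - 1) / 2 * (∑ k, S.mulVec (fun i => ξ i * s i) k ^ 2)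
      = (g t * w ^ (3 * m * mstar - R)) * (R / 2 * ∑ i, y i ^ 2) := by
    have h1 : ∀ k, y k ^ 2 = c ^ 2 * S.mulVec (fun i => ξ i * s i) k ^ 2 := fun k => by
      rw [show y k = c * S.mulVec (fun i => ξ i * s i) k from hL ξ k]; ring
    rw [Finset.sum_congr rfl fun k _ => h1 k, ← Finset.mul_sum]
    have hscal1 : g t * w ^ (3 * m * mstar - R) * c ^ 2 = g t * w ^ (-R - 1) := by
      have h2 : w ^ (3 * m * mstar - R) * c ^ 2 = w ^ (-R - 1) := by
        rw [hc, sq, ← Real.rpow_add hw, ← Real.rpow_add hw]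
        congr 1; linear_combination hms
      linear_combination g t * h2
    linear_combination (-(R / 2 * (∑ k, S.mulVec (fun i => ξ i * s i) k ^ 2))) * hscal1
  -- term 2
  have hscal2 : (g t * w ^ (-R)) ^ (1 - m) * (1 / (m * κ ^ (m - 1)) * (K * c) ^ m)
      = g t * w ^ (3 * m * mstar - R) * (1 / m * κ ^ (1 - m)) := by
    have hKc' : K * c = g t * w ^ ((1 - R + 4 * mstar) + -(1 + mstar)) := by
      rw [hK, hc, mul_assoc, ← Real.rpow_add hw]
    rw [hKc', Real.mul_rpow hgt.le (Real.rpow_nonneg hw.le _),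
      Real.mul_rpow hgt.le (Real.rpow_nonneg hw.le _),
      ← Real.rpow_mul hw.le, ← Real.rpow_mul hw.le]
    have hm0 : m ≠ 0 := by positivity
    have hκm : κ ^ (m - 1) ≠ 0 := (Real.rpow_pos_of_pos hκ _).ne'
    have e1 : (g t) ^ (1 - m) * (g t) ^ m = g t := by
      rw [← Real.rpow_add hgt]; norm_num
    have e2 : w ^ (-R * (1 - m)) * w ^ (((1 - R + 4 * mstar) + -(1 + mstar)) * m)
        = w ^ (3 * m * mstar - R) := by
      rw [← Real.rpow_add hw]; congr 1; ring
    have e3 : κ ^ (1 - m) * κ ^ (m - 1) = 1 := by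
      rw [← Real.rpow_add hκ]; norm_num
    have e12 : ((g t) ^ (1 - m) * w ^ (-R * (1 - m))) * ((g t) ^ m * w ^ (((1 - R + 4 * mstar) + -(1 + mstar)) * m))
        = g t * w ^ (3 * m * mstar - R) := by
      calc ((g t) ^ (1 - m) * w ^ (-R * (1 - m))) * ((g t) ^ m * w ^ (((1 - R + 4 * mstar) + -(1 + mstar)) * m))
          = ((g t) ^ (1 - m) * (g t) ^ m) * (w ^ (-R * (1 - m)) * w ^ (((1 - R + 4 * mstar) + -(1 + mstar)) * m)) := by ring
        _ = g t * w ^ (3 * m * mstar - R) := by rw [e1, e2]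
    have e4 : (1:ℝ) / (m * κ ^ (m - 1)) = 1 / m * κ ^ (1 - m) := by
      field_simp
      linear_combination (-1) * e3
    calc (g t) ^ (1 - m) * w ^ (-R * (1 - m)) * (1 / (m * κ ^ (m - 1)) * ((g t) ^ m * w ^ (((1 - R + 4 * mstar) + -(1 + mstar)) * m)))
        = (((g t) ^ (1 - m) * w ^ (-R * (1 - m))) * ((g t) ^ m * w ^ (((1 - R + 4 * mstar) + -(1 + mstar)) * m))) * (1 / (m * κ ^ (m - 1))) := by
          ring
      _ = (g t * w ^ (3 * m * mstar - R)) * (1 / (m * κ ^ (m - 1))) := by rw [e12]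
      _ = g t * w ^ (3 * m * mstar - R) * (1 / m * κ ^ (1 - m)) := by rw [e4]
  have hT2 : (g t * w ^ (-R)) ^ (1 - m) * Φ s (fun j => -(D1 (vpi t w s) ξ j))
      = g t * w ^ (3 * m * mstar - R) * (1 / m * ∑ j, κ ^ (1 - m) * |f1 y j| ^ m) := by
    rw [hPhival]
    rw [show ∑ j, κ ^ (1 - m) * |f1 y j| ^ m = κ ^ (1 - m) * ∑ j, |f1 y j| ^ m from
      (Finset.mul_sum _ _ _).symm]
    linear_combination (∑ j, |f1 y j| ^ m) * hscal2
  -- term 3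
  set v : Fin d → Fin d → ℝ := fun i p => piv p - (Pi.single i 1 : Fin d → ℝ) p with hvdef
  set u : Fin d → Fin d → ℝ := fun i q => S.mulVec (v i) q with hudef
  set U : Matrix (Fin d) (Fin d) ℝ := Matrix.of (fun q i => piv i * u i q) with hUdef
  set Hm : Matrix (Fin d) (Fin d) ℝ := Matrix.of (fun a b => H a b) with hHmdef
  have hApiv : A.mulVec piv = fun k => (1 / R) * (μ k - r) := by
    have h0 : piv = (1 / R) • A⁻¹.mulVec (fun q => μ q - r) := rfl
    rw [h0, Matrix.mulVec_smul, Matrix.mulVec_mulVec, hAAinv, Matrix.one_mulVec]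
    rfl
  have hkey1 : ∀ i k, μ k - r - R * A k i = R * A.mulVec (v i) k := by
    intro i k
    have h3 : A.mulVec (Pi.single i 1) k = A k i := by
      simp [Matrix.mulVec_single]
    have h1 : A.mulVec (v i) k = A.mulVec piv k - A k i := by
      have h2 : v i = piv - Pi.single i 1 := rfl
      rw [h2, Matrix.mulVec_sub, Pi.sub_apply, h3]
    rw [h1, congrFun hApiv k]
    field_simp
  have hQ : ∀ i j, (∑ k, ∑ l, (μ k - r - R * A k i) * A⁻¹ k l * (μ l - r - R * A l j))
      = R ^ 2 * ∑ q, u i q * u j q := by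
    intro i j
    have hL1 : ∀ k l, (μ k - r - R * A k i) * A⁻¹ k l * (μ l - r - R * A l j)
        = R ^ 2 * (A.mulVec (v i) k * (A⁻¹ k l * A.mulVec (v j) l)) := fun k l => by
      rw [hkey1 i k, hkey1 j l]; ring
    have hAinvAv : A⁻¹.mulVec (A.mulVec (v j)) = v j := by
      rw [Matrix.mulVec_mulVec, hAinvA, Matrix.one_mulVec]
    calc ∑ k, ∑ l, (μ k - r - R * A k i) * A⁻¹ k l * (μ l - r - R * A l j)
        = ∑ k, ∑ l, R ^ 2 * (A.mulVec (v i) k * (A⁻¹ k l * A.mulVec (v j) l)) :=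
          Finset.sum_congr rfl fun k _ => Finset.sum_congr rfl fun l _ => hL1 k l
      _ = R ^ 2 * ∑ k, A.mulVec (v i) k * v j k := by
          rw [Finset.mul_sum]
          refine Finset.sum_congr rfl fun k _ => ?_
          have h4 : v j k = A⁻¹.mulVec (A.mulVec (v j)) k := by rw [hAinvAv]
          rw [h4]
          have h5 : A⁻¹.mulVec (A.mulVec (v j)) k = ∑ l, A⁻¹ k l * A.mulVec (v j) l := rfl
          rw [h5, Finset.mul_sum, Finset.mul_sum]
      _ = R ^ 2 * ∑ q, u i q * u j q := by
          congr 1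
          have h6 : A.mulVec (v i) = S.mulVec (S.mulVec (v i)) := by
            rw [Matrix.mulVec_mulVec]
          rw [h6]
          calc ∑ k, S.mulVec (S.mulVec (v i)) k * v j k
              = ∑ k, ∑ q, (S k q * u i q) * v j k := by
                refine Finset.sum_congr rfl fun k _ => ?_
                have h7 : S.mulVec (S.mulVec (v i)) k = ∑ q, S k q * u i q := rfl
                rw [h7, Finset.sum_mul]
            _ = ∑ q, ∑ k, (S k q * u i q) * v j k := Finset.sum_comm
            _ = ∑ q, u i q * u j q := by
                refine Finset.sum_congr rfl fun q _ => ?_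
                have h8 : u j q = ∑ k, S q k * v j k := rfl
                rw [h8, Finset.mul_sum]
                exact Finset.sum_congr rfl fun k _ => by rw [hSsym q k]; ring
  have hUU : ∀ i j, piv i * piv j * ∑ q, u i q * u j q = (U.transpose * U) i j := by
    intro i j
    rw [Matrix.mul_apply, Finset.mul_sum]
    exact Finset.sum_congr rfl fun q _ => by
      simp only [Matrix.transpose_apply, hUdef, Matrix.of_apply]; ring
  have hSHS : ∀ i j, (∑ l, S l i * ∑ k, H l k * S k j) = (S.transpose * (Hm * S)) i j := by
    intro i j
    rw [Matrix.mul_apply]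
    refine Finset.sum_congr rfl fun l _ => ?_
    rw [Matrix.transpose_apply, Matrix.mul_apply]
    congr 1
  have hterm3 : ∀ i j, ch0 w s i j * D1 (fun ζ => D1 (vpi t w s) ζ j) ξ i
      = (K * c * c * w ^ 2) * ((U.transpose * U) i j * (S.transpose * (Hm * S)) i j) := by
    intro i j
    rw [hD2e i j]
    have hch0e : ch0 w s i j = w ^ 2 * piv i * piv j / (R ^ 2 * s i * s j) *
        (∑ k, ∑ l, (μ k - r - R * A k i) * A⁻¹ k l * (μ l - r - R * A l j)) := rfl
    rw [hch0e, hQ i j, ← hUU i j, ← hSHS i j]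
    have haux : ∀ p q e z si sj : ℝ, si ≠ 0 → sj ≠ 0 →
        w ^ 2 * p * q / (R ^ 2 * si * sj) * (R ^ 2 * e) * (K * c * c * (si * (sj * z)))
          = (K * c * c * w ^ 2) * ((p * q * e) * z) := by
      intro p q e z si sj h1 h2
      field_simp
    exact haux (piv i) (piv j) _ _ _ _ (hs i).ne' (hs j).ne'
  have hsum3 : ∑ i, ∑ j, ch0 w s i j * D1 (fun ζ => D1 (vpi t w s) ζ j) ξ i
      = (K * c * c * w ^ 2) * Matrix.trace ((U.transpose * U).transpose * (S.transpose * (Hm * S))) := by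
    rw [← aux_trace, Finset.mul_sum]
    exact Finset.sum_congr rfl fun i _ => by
      rw [Finset.mul_sum]; exact Finset.sum_congr rfl fun j _ => hterm3 i j
  have htr3 : Matrix.trace ((U.transpose * U).transpose * (S.transpose * (Hm * S)))
      = Matrix.trace (Hm * (S * ((U.transpose * U) * S))) := by
    rw [Matrix.transpose_mul, Matrix.transpose_transpose, hStr]
    rw [show (U.transpose * U) * (S * (Hm * S)) = ((U.transpose * U) * S) * (Hm * S) from by
      simp only [Matrix.mul_assoc]]
    rw [Matrix.trace_mul_comm, Matrix.mul_assoc]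
  have hSig : Sig = R • U := by
    ext q i
    show piv i * R * S.mulVec (fun l => piv l - (Pi.single i 1 : Fin d → ℝ) l) q = R * (piv i * u i q)
    have : S.mulVec (fun l => piv l - (Pi.single i 1 : Fin d → ℝ) l) q = u i q := rfl
    rw [this]; ring
  have hMxeq : Mx = (R ^ 2) • (S * ((U.transpose * U) * S)) := by
    show ((Sig * S).transpose * (Sig * S)) = _
    rw [hSig, Matrix.smul_mul, Matrix.transpose_smul, Matrix.smul_mul, Matrix.mul_smul, smul_smul]
    rw [Matrix.transpose_mul, hStr]
    congr 1
    · rw [sq]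
    · simp only [Matrix.mul_assoc]
  have htrHm : ∑ i, ∑ j, H i j * Mx j i = R ^ 2 * Matrix.trace (Hm * (S * ((U.transpose * U) * S))) := by
    have h1 : ∑ i, ∑ j, H i j * Mx j i = Matrix.trace (Hm * Mx) := by
      rw [Matrix.trace]
      simp only [Matrix.diag_apply, Matrix.mul_apply, hHmdef, Matrix.of_apply]
    rw [h1, hMxeq, Matrix.mul_smul, Matrix.trace_smul, smul_eq_mul]
  have hscal3 : K * c * c * w ^ 2 = g t * w ^ (3 * m * mstar - R) := by
    rw [hK, hc]
    have h2 : (w : ℝ) ^ (2 : ℕ) = w ^ ((2 : ℝ)) := by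
      rw [← Real.rpow_natCast w 2]; norm_num
    rw [h2]
    have h3 : w ^ (1 - R + 4 * mstar) * w ^ (-(1 + mstar)) * w ^ (-(1 + mstar)) * w ^ ((2 : ℝ))
        = w ^ (3 * m * mstar - R) := by
      rw [← Real.rpow_add hw, ← Real.rpow_add hw, ← Real.rpow_add hw]
      congr 1; linear_combination -hms
    linear_combination (g t) * h3
  have hT3 : (1 / 2) * ∑ i, ∑ j, ch0 w s i j * D1 (fun ζ => D1 (vpi t w s) ζ j) ξ i
      = g t * w ^ (3 * m * mstar - R) * (1 / (2 * R ^ 2) * ∑ i, ∑ j, H i j * Mx j i) := by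
    rw [hsum3, htr3, hscal3, htrHm]
    have hR2 : (R : ℝ) ^ 2 ≠ 0 := pow_ne_zero 2 hR0.ne'
    field_simp
  -- assembly
  have hred2 : R / 2 * ∑ i, y i ^ 2 - 1 / m * ∑ j, κ ^ (1 - m) * |f1 y j| ^ m
      + 1 / (2 * R ^ 2) * ∑ i, ∑ j, H i j * Mx j i = lam := hred y
  rw [hT1, hT2, hT3]
  linear_combination (g t * w ^ (3 * m * mstar - R)) * hred2
end

section
/- Let d ≥ 1, m > 2, m^* := 1/(3m−2), R ∈ (0,1), λ > 0, T > 0. Let g, ḡ : [0,T] → ℝ be continuous with 0 < g₋ ≤ g(t) ≤ g₊ and 0 ≤ ḡ(t) ≤ ḡ₊ for all t ∈ [0,T]. Let 𝔖 be a symmetric positive definite d×d real matrix, let π ∈ ℝ^d satisfy π_i > 0 for all i and Σ_{i=1}^d π_i < 1, and let ϖ̃ : ℝ^d → [0,∞) be continuously differentiable with ϖ̃(x) ≤ C₀|x|^{1+2/m} and |∇ϖ̃(x)| ≤ C₀|x|^{2/m} for all x ∈ ℝ^d, for some C₀ > 0. For ε ∈ (0,1] define ψ^ε(t,w,s,h)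 := g(t) w^{1−R}/(1−R) − (wε)^{2m^*} λ w^{1−R} ḡ(t) − (wε)^{4m^*} λ g(t) w^{1−R} ϖ̃((wε)^{−m^*} 𝔖((h×s)/w − π)) and u(t,w,s) := λ w^{1−R+2m^*} ḡ(t). Then there exists c_W > 0 such that for every ε ∈ (0,1] and every (t,w,s,h) ∈ [0,T]×(0,∞)×(0,∞)^d×ℝ^d with h_i > 0 for all i and Σ_{i=1}^d s_i h_i/w < 1, one has 1 − c_W (wε)^{1/m} ≤ (∂_w ψ^ε(t,w,s,h) + ε^{2m^*} ∂_w u(t,w,s))/(g(t) w^{−R}) ≤ 1 + c_W (wε)^{1/m}, and 1 − c_W ((wε)^{2m^*} + (wε)^{1/m}) ≤ ∂_w ψ^ε(t,w,s,h)/(g(t) w^{−R}) ≤ 1 + c_W ((wε)^{2m^*} + (wε)^{1/m}). -/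
open Real

private lemma stmt15_cs (n : ℕ) (f g : Fin n → ℝ) :
    |∑ i, f i * g i| ≤ √(∑ i, f i ^ 2) * √(∑ i, g i ^ 2) := by
  rw [abs_le]
  refine ⟨?_, Real.sum_mul_le_sqrt_mul_sqrt _ f g⟩
  have h := Real.sum_mul_le_sqrt_mul_sqrt Finset.univ f (fun i => -(g i))
  have e1 : ∑ i, f i * -(g i) = -∑ i, f i * g i := by
    rw [← Finset.sum_neg_distrib]; congr 1; funext i; ring
  have e2 : ∑ i : Fin n, (-(g i)) ^ 2 = ∑ i, (g i) ^ 2 := by congr 1; funext i; ring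
  rw [e1, e2] at h
  linarith

private lemma stmt15_sq (n : ℕ) (f : Fin n → ℝ) (c : ℝ) (hc : 0 ≤ c) (hf : ∀ i, |f i| ≤ c) :
    √(∑ i, f i ^ 2) ≤ √(n : ℝ) * c := by
  have h1 : ∑ i, f i ^ 2 ≤ (n : ℝ) * c ^ 2 := by
    calc ∑ i, f i ^ 2 ≤ ∑ _i : Fin n, c ^ 2 :=
          Finset.sum_le_sum fun i _ => by
            have := hf i; nlinarith [abs_nonneg (f i), sq_abs (f i)]
      _ = (n : ℝ) * c ^ 2 := by simp [mul_comm]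
  calc √(∑ i, f i ^ 2) ≤ √((n : ℝ) * c ^ 2) := Real.sqrt_le_sqrt h1
    _ = √(n : ℝ) * c := by rw [Real.sqrt_mul (by positivity), Real.sqrt_sq hc]

private lemma stmt15_fd (d : ℕ) (L : (Fin d → ℝ) →L[ℝ] ℝ) (v : Fin d → ℝ) :
    L v = ∑ i, v i * L (Pi.single i 1) := by
  have h : v = ∑ i, (v i) • (Pi.single i 1 : Fin d → ℝ) := by
    funext j
    simp [Pi.single_apply, Finset.sum_apply]
  conv_lhs => rw [h]
  rw [map_sum]
  simp [smul_eq_mul]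

private lemma stmt15_deriv (d : ℕ) (R lam mstar : ℝ) (gt gbt : ℝ)
    (S : Matrix (Fin d) (Fin d) ℝ) (piv : Fin d → ℝ)
    (tw : (Fin d → ℝ) → ℝ) (htw : ContDiff ℝ 1 tw)
    (s h : Fin d → ℝ) (ε w : ℝ) (hε : 0 < ε) (hw : 0 < w) :
    HasDerivAt (fun ω => gt * ω ^ (1 - R) / (1 - R)
        - (ω * ε) ^ (2 * mstar) * lam * ω ^ (1 - R) * gbt
        - (ω * ε) ^ (4 * mstar) * lam * gt * ω ^ (1 - R) *
            tw (fun k => (ω * ε) ^ (-mstar) * S.mulVec (fun i => h i * s i / ω - piv i) k))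
      (gt * ((1 - R) * w ^ (1 - R - 1)) / (1 - R) -
        (2 * mstar * (w * ε) ^ (2 * mstar - 1) * ε * lam * w ^ (1 - R) +
            (w * ε) ^ (2 * mstar) * lam * ((1 - R) * w ^ (1 - R - 1))) *
          gbt -
        (((4 * mstar * (w * ε) ^ (4 * mstar - 1) * ε * lam * gt * w ^ (1 - R) +
              (w * ε) ^ (4 * mstar) * lam * gt * ((1 - R) * w ^ (1 - R - 1))) *
            tw fun k => (w * ε) ^ (-mstar) * S.mulVec (fun i => h i * s i / w - piv i) k) +
          (w * ε) ^ (4 * mstar) * lam * gt * w ^ (1 - R) *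
            (fderiv ℝ tw fun k =>
                (w * ε) ^ (-mstar) * S.mulVec (fun i => h i * s i / w - piv i) k) fun k =>
              -mstar * (w * ε) ^ (-mstar - 1) * ε * S.mulVec (fun i => h i * s i / w - piv i) k +
                (w * ε) ^ (-mstar) * ∑ j : Fin d, S k j * (h j * s j * -(w ^ 2)⁻¹))) w := by
  have hb : w * ε ≠ 0 := (mul_pos hw hε).ne'
  have hlin : HasDerivAt (fun ω : ℝ => ω * ε) ε w := by
    simpa using (hasDerivAt_id w).mul_const ε
  have hrp : ∀ p : ℝ, HasDerivAt (fun ω : ℝ => (ω * ε) ^ p) (p * (w * ε) ^ (p - 1) * ε) w := by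
    intro p
    have := (Real.hasDerivAt_rpow_const (p := p) (Or.inl hb)).comp w hlin
    simpa [mul_assoc, Function.comp_def] using this
  have hpow : HasDerivAt (fun ω : ℝ => ω ^ (1 - R)) ((1 - R) * w ^ (1 - R - 1)) w :=
    Real.hasDerivAt_rpow_const (Or.inl hw.ne')
  have hc : ∀ k, HasDerivAt (fun ω => S.mulVec (fun i => h i * s i / ω - piv i) k)
      (∑ j, S k j * (h j * s j * (-(w ^ 2)⁻¹))) w := by
    intro k
    have hfun : (fun ω => S.mulVec (fun i => h i * s i / ω - piv i) k)
        = fun ω => ∑ j, S k j * (h j * s j * ω⁻¹ - piv j) := by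
      funext ω; simp [Matrix.mulVec, dotProduct, div_eq_mul_inv]
    rw [hfun]
    apply HasDerivAt.fun_sum
    intro j _
    exact (((hasDerivAt_inv hw.ne').const_mul (h j * s j)).sub_const (piv j)).const_mul (S k j)
  have hYpi : HasDerivAt
      (fun ω => (fun k => (ω * ε) ^ (-mstar) * S.mulVec (fun i => h i * s i / ω - piv i) k))
      (fun k => (-mstar * (w * ε) ^ (-mstar - 1) * ε) * S.mulVec (fun i => h i * s i / w - piv i) k
        + (w * ε) ^ (-mstar) * ∑ j, S k j * (h j * s j * (-(w ^ 2)⁻¹))) w :=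
    hasDerivAt_pi.mpr fun k => (hrp (-mstar)).mul (hc k)
  have htwY : HasDerivAt
      (fun ω => tw (fun k => (ω * ε) ^ (-mstar) * S.mulVec (fun i => h i * s i / ω - piv i) k))
      (fderiv ℝ tw (fun k => (w * ε) ^ (-mstar) * S.mulVec (fun i => h i * s i / w - piv i) k)
        (fun k => (-mstar * (w * ε) ^ (-mstar - 1) * ε) *
            S.mulVec (fun i => h i * s i / w - piv i) k
          + (w * ε) ^ (-mstar) * ∑ j, S k j * (h j * s j * (-(w ^ 2)⁻¹)))) w :=
    ((htw.differentiable one_ne_zero _).hasFDerivAt).comp_hasDerivAt w hYpi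
  have hT1 : HasDerivAt (fun ω : ℝ => gt * ω ^ (1 - R) / (1 - R))
      (gt * ((1 - R) * w ^ (1 - R - 1)) / (1 - R)) w := (hpow.const_mul gt).div_const (1 - R)
  have hT2 := (((hrp (2 * mstar)).mul_const lam).mul hpow).mul_const gbt
  have hT3 := ((((hrp (4 * mstar)).mul_const lam).mul_const gt).mul hpow).mul htwY
  exact (hT1.sub hT2).sub hT3

set_option maxHeartbeats 1000000 in
/-- Uniform bounds on the `w`-derivative of the candidate expansion `ψ^ε` of the frictional
value function, on the admissible region, for small price impact. -/
theorem stmt15 (d : ℕ) (hd : 1 ≤ d) (m R lam T : ℝ) (hm : 2 < m)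
    (hR : R ∈ Set.Ioo (0 : ℝ) 1) (hlam : 0 < lam) (hT : 0 < T)
    (g gbar : ℝ → ℝ) (hgcont : ContinuousOn g (Set.Icc 0 T))
    (hgbarcont : ContinuousOn gbar (Set.Icc 0 T))
    (gminus gplus gbarplus : ℝ) (hgminus : 0 < gminus)
    (hgb : ∀ t ∈ Set.Icc (0 : ℝ) T, gminus ≤ g t ∧ g t ≤ gplus)
    (hgbarb : ∀ t ∈ Set.Icc (0 : ℝ) T, 0 ≤ gbar t ∧ gbar t ≤ gbarplus)
    (S : Matrix (Fin d) (Fin d) ℝ) (hS : S.PosDef)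
    (piv : Fin d → ℝ) (hpiv : ∀ i, 0 < piv i) (hpivsum : ∑ i, piv i < 1)
    (tw : (Fin d → ℝ) → ℝ) (htw : ContDiff ℝ 1 tw) (htwnn : ∀ x, 0 ≤ tw x)
    (C₀ : ℝ) (hC₀ : 0 < C₀)
    (htwgrowth : ∀ x : Fin d → ℝ,
      tw x ≤ C₀ * Real.sqrt (∑ i, x i ^ 2) ^ (1 + 2 / m))
    (htwgrad : ∀ x : Fin d → ℝ,
      Real.sqrt (∑ i, (fderiv ℝ tw x (Pi.single i 1)) ^ 2) ≤
        C₀ * Real.sqrt (∑ i, x i ^ 2) ^ (2 / m)) :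
    let mstar : ℝ := 1 / (3 * m - 2)
    let ψ : ℝ → ℝ → ℝ → (Fin d → ℝ) → (Fin d → ℝ) → ℝ := fun ε t w s h =>
      g t * w ^ (1 - R) / (1 - R) - (w * ε) ^ (2 * mstar) * lam * w ^ (1 - R) * gbar t
        - (w * ε) ^ (4 * mstar) * lam * g t * w ^ (1 - R) *
            tw (fun k => (w * ε) ^ (-mstar) *
              S.mulVec (fun i => h i * s i / w - piv i) k)
    let u : ℝ → ℝ → ℝ := fun t w => lam * w ^ (1 - R + 2 * mstar) * gbar t
    ∃ cW : ℝ, 0 < cW ∧ ∀ ε ∈ Set.Ioc (0 : ℝ) 1, ∀ t ∈ Set.Icc (0 : ℝ) T,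
      ∀ w : ℝ, 0 < w → ∀ s : Fin d → ℝ, (∀ i, 0 < s i) → ∀ h : Fin d → ℝ,
        (∀ i, 0 < h i) → (∑ i, s i * h i / w) < 1 →
        (1 - cW * (w * ε) ^ (1 / m) ≤
            (deriv (fun ω => ψ ε t ω s h) w + ε ^ (2 * mstar) * deriv (fun ω => u t ω) w) /
              (g t * w ^ (-R)) ∧
          (deriv (fun ω => ψ ε t ω s h) w + ε ^ (2 * mstar) * deriv (fun ω => u t ω) w) /
              (g t * w ^ (-R)) ≤
            1 + cW * (w * ε) ^ (1 / m)) ∧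
        (1 - cW * ((w * ε) ^ (2 * mstar) + (w * ε) ^ (1 / m)) ≤
            deriv (fun ω => ψ ε t ω s h) w / (g t * w ^ (-R)) ∧
          deriv (fun ω => ψ ε t ω s h) w / (g t * w ^ (-R)) ≤
            1 + cW * ((w * ε) ^ (2 * mstar) + (w * ε) ^ (1 / m))) := by
  intro mstar ψ u
  obtain ⟨hR0, hR1⟩ := hR
  have hm0 : (0:ℝ) < m := by linarith
  have hmne : m ≠ 0 := hm0.ne'
  have h3m2 : (0:ℝ) < 3 * m - 2 := by linarith
  have h3m2ne : (3 * m - 2 : ℝ) ≠ 0 := h3m2.ne'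
  have hmsval : mstar = 1 / (3 * m - 2) := rfl
  have hms0 : 0 < mstar := by rw [hmsval]; positivity
  have hms1 : mstar ≤ 1 := by rw [hmsval, div_le_one h3m2]; linarith
  have hR1ne : (1 : ℝ) - R ≠ 0 := by intro hcon; rw [sub_eq_zero] at hcon; exact hR1.ne hcon.symm
  set SB : ℝ := (∑ i, ∑ j, |S i j|) + 1 with hSBdef
  have hSB1 : 1 ≤ SB := by
    have h0 : (0:ℝ) ≤ ∑ i, ∑ j, |S i j| := by positivity
    rw [hSBdef]; linarith
  have hSB0 : 0 < SB := by linarith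
  have hrow : ∀ k, ∑ j, |S k j| ≤ SB := by
    intro k
    have h1 : ∑ j, |S k j| ≤ ∑ i, ∑ j, |S i j| :=
      Finset.single_le_sum (f := fun i => ∑ j, |S i j|) (fun i _ => by positivity)
        (Finset.mem_univ k)
    rw [hSBdef]; linarith
  have hsd : (0:ℝ) < Real.sqrt d := Real.sqrt_pos.mpr (by exact_mod_cast hd)
  set CY : ℝ := 2 * Real.sqrt d * SB with hCYdef
  have hCY : 0 < CY := by rw [hCYdef]; positivity
  set CE : ℝ := lam * (4 * mstar + (1 - R)) * C₀ * CY ^ (1 + 2 / m)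
      + lam * C₀ * CY ^ (2 / m) * CY with hCEdef
  have hCE : 0 ≤ CE := by
    have h1 : (0:ℝ) ≤ 4 * mstar + (1 - R) := by linarith
    rw [hCEdef]; positivity
  have hgbp : 0 ≤ gbarplus :=
    le_trans (hgbarb 0 ⟨le_refl _, hT.le⟩).1 (hgbarb 0 ⟨le_refl _, hT.le⟩).2
  set Kb : ℝ := lam * (1 - R + 2 * mstar) * gbarplus / gminus with hKbdef
  have hKb : 0 ≤ Kb := by
    have h1 : (0:ℝ) ≤ 1 - R + 2 * mstar := by linarith
    rw [hKbdef]; positivity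
  refine ⟨CE + Kb + 1, by positivity, ?_⟩
  intro ε hε t ht w hw s hs h hh hsum
  have hε0 : 0 < ε := hε.1
  have hb : 0 < w * ε := mul_pos hw hε0
  have hgt : gminus ≤ g t := (hgb t ht).1
  have hgt0 : 0 < g t := lt_of_lt_of_le hgminus hgt
  have hgbart := hgbarb t ht
  have hwR : (0:ℝ) < w ^ (-R) := Real.rpow_pos_of_pos hw _
  have hc : (0:ℝ) < g t * w ^ (-R) := by positivity
  -- basic bounds on portfolio weights
  have hws : ∀ j, h j * s j / w < 1 := by
    intro j
    have h1 : s j * h j / w ≤ ∑ i, s i * h i / w :=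
      Finset.single_le_sum (f := fun i => s i * h i / w)
        (fun i _ => by have := hs i; have := hh i; positivity) (Finset.mem_univ j)
    have h2 : h j * s j / w = s j * h j / w := by ring
    linarith
  have hvj : ∀ j, |h j * s j / w - piv j| ≤ 1 := by
    intro j
    have h1 : 0 < h j * s j / w := by have := hs j; have := hh j; positivity
    have h3 : piv j < 1 :=
      lt_of_le_of_lt (Finset.single_le_sum (fun i _ => (hpiv i).le) (Finset.mem_univ j)) hpivsum
    have h4 := hpiv j
    have h5 := hws j
    rw [abs_le]; constructor <;> linarith
  have hmv : ∀ k, |S.mulVec (fun i => h i * s i / w - piv i) k| ≤ SB := by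
    intro k
    have heq : S.mulVec (fun i => h i * s i / w - piv i) k
        = ∑ j, S k j * (h j * s j / w - piv j) := by
      simp [Matrix.mulVec, dotProduct]
    rw [heq]
    calc |∑ j, S k j * (h j * s j / w - piv j)|
        ≤ ∑ j, |S k j * (h j * s j / w - piv j)| := Finset.abs_sum_le_sum_abs _ _
      _ ≤ ∑ j, |S k j| := Finset.sum_le_sum fun j _ => by
          rw [abs_mul]
          exact mul_le_of_le_one_right (abs_nonneg _) (hvj j)
      _ ≤ SB := hrow k
  have hmv2 : ∀ k, |∑ j, S k j * (h j * s j * -(w ^ 2)⁻¹)| ≤ SB / w := by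
    intro k
    calc |∑ j, S k j * (h j * s j * -(w ^ 2)⁻¹)|
        ≤ ∑ j, |S k j * (h j * s j * -(w ^ 2)⁻¹)| := Finset.abs_sum_le_sum_abs _ _
      _ ≤ ∑ j, |S k j| * (1 / w) := Finset.sum_le_sum fun j _ => by
          rw [abs_mul]
          apply mul_le_mul_of_nonneg_left _ (abs_nonneg _)
          rw [abs_mul, abs_neg, abs_inv, abs_of_nonneg (sq_nonneg w),
            abs_of_nonneg (mul_nonneg (hh j).le (hs j).le)]
          have hlt : h j * s j < w := (div_lt_one hw).mp (hws j)
          calc h j * s j * (w ^ 2)⁻¹ ≤ w * (w ^ 2)⁻¹ :=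
                mul_le_mul_of_nonneg_right hlt.le (by positivity)
            _ = 1 / w := by
                rw [sq, mul_inv, ← mul_assoc, mul_inv_cancel₀ hw.ne', one_mul, one_div]
      _ = (∑ j, |S k j|) * (1 / w) := by rw [← Finset.sum_mul]
      _ ≤ SB * (1 / w) := mul_le_mul_of_nonneg_right (hrow k) (by positivity)
      _ = SB / w := by ring
  -- the derivative of ψ in w
  have hD := stmt15_deriv d R lam mstar (g t) (gbar t) S piv tw htw s h ε w hε0 hw
  set Yw : Fin d → ℝ :=
    fun k => (w * ε) ^ (-mstar) * S.mulVec (fun i => h i * s i / w - piv i) k with hYw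
  set Yp : Fin d → ℝ :=
    fun k => (-mstar) * (w * ε) ^ (-mstar - 1) * ε * S.mulVec (fun i => h i * s i / w - piv i) k
      + (w * ε) ^ (-mstar) * ∑ j, S k j * (h j * s j * -(w ^ 2)⁻¹) with hYp
  set G : ℝ := (fderiv ℝ tw Yw) Yp with hG
  have hXnn : (0:ℝ) ≤ (w * ε) ^ (-mstar) := Real.rpow_nonneg hb.le _
  have hYwk : ∀ k, |Yw k| ≤ SB * (w * ε) ^ (-mstar) := by
    intro k
    calc |Yw k| = (w * ε) ^ (-mstar) * |S.mulVec (fun i => h i * s i / w - piv i) k| := by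
          rw [show Yw k = (w * ε) ^ (-mstar) * S.mulVec (fun i => h i * s i / w - piv i) k
            from rfl, abs_mul, abs_of_nonneg hXnn]
      _ ≤ (w * ε) ^ (-mstar) * SB := mul_le_mul_of_nonneg_left (hmv k) hXnn
      _ = SB * (w * ε) ^ (-mstar) := by ring
  have hiG : (w * ε) ^ (-mstar - 1) * ε = (w * ε) ^ (-mstar) / w := by
    rw [Real.rpow_sub hb, Real.rpow_one]
    field_simp
  have hYpk : ∀ k, |Yp k| ≤ 2 * SB * (w * ε) ^ (-mstar) / w := by
    intro k
    have ht1 : |(-mstar) * (w * ε) ^ (-mstar - 1) * ε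
          * S.mulVec (fun i => h i * s i / w - piv i) k|
        ≤ mstar * ((w * ε) ^ (-mstar - 1) * ε) * SB := by
      calc |(-mstar) * (w * ε) ^ (-mstar - 1) * ε
            * S.mulVec (fun i => h i * s i / w - piv i) k|
          = mstar * (w * ε) ^ (-mstar - 1) * ε
            * |S.mulVec (fun i => h i * s i / w - piv i) k| := by
            rw [abs_mul, abs_mul, abs_mul, abs_neg, abs_of_nonneg hms0.le,
              abs_of_nonneg (Real.rpow_nonneg hb.le _), abs_of_nonneg hε0.le]
        _ ≤ mstar * (w * ε) ^ (-mstar - 1) * ε * SB := by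
            apply mul_le_mul_of_nonneg_left (hmv k)
            positivity
        _ = mstar * ((w * ε) ^ (-mstar - 1) * ε) * SB := by ring
    have ht2 : |(w * ε) ^ (-mstar) * ∑ j, S k j * (h j * s j * -(w ^ 2)⁻¹)|
        ≤ (w * ε) ^ (-mstar) * (SB / w) := by
      rw [abs_mul, abs_of_nonneg hXnn]
      exact mul_le_mul_of_nonneg_left (hmv2 k) hXnn
    calc |Yp k| = |(-mstar) * (w * ε) ^ (-mstar - 1) * ε
            * S.mulVec (fun i => h i * s i / w - piv i) k
          + (w * ε) ^ (-mstar) * ∑ j, S k j * (h j * s j * -(w ^ 2)⁻¹)| := rfl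
      _ ≤ |(-mstar) * (w * ε) ^ (-mstar - 1) * ε
            * S.mulVec (fun i => h i * s i / w - piv i) k|
          + |(w * ε) ^ (-mstar) * ∑ j, S k j * (h j * s j * -(w ^ 2)⁻¹)| := abs_add_le _ _
      _ ≤ mstar * ((w * ε) ^ (-mstar - 1) * ε) * SB + (w * ε) ^ (-mstar) * (SB / w) :=
          add_le_add ht1 ht2
      _ ≤ 2 * SB * (w * ε) ^ (-mstar) / w := by
          rw [hiG]
          have h1 : mstar * ((w * ε) ^ (-mstar) / w) * SB
              ≤ 1 * ((w * ε) ^ (-mstar) / w) * SB :=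
            mul_le_mul_of_nonneg_right
              (mul_le_mul_of_nonneg_right hms1 (by positivity)) hSB0.le
          have h2 : (1:ℝ) * ((w * ε) ^ (-mstar) / w) * SB + (w * ε) ^ (-mstar) * (SB / w)
              = 2 * SB * (w * ε) ^ (-mstar) / w := by ring
          linarith
  -- norm bounds
  have hNw : Real.sqrt (∑ i, Yw i ^ 2) ≤ CY * (w * ε) ^ (-mstar) := by
    have h0 := stmt15_sq d Yw (SB * (w * ε) ^ (-mstar)) (by positivity) hYwk
    have h1 : Real.sqrt d * SB ≤ CY := by
      rw [hCYdef]; nlinarith [mul_nonneg hsd.le hSB0.le]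
    calc Real.sqrt (∑ i, Yw i ^ 2) ≤ Real.sqrt d * (SB * (w * ε) ^ (-mstar)) := h0
      _ = (Real.sqrt d * SB) * (w * ε) ^ (-mstar) := by ring
      _ ≤ CY * (w * ε) ^ (-mstar) := mul_le_mul_of_nonneg_right h1 hXnn
  have hNp : Real.sqrt (∑ i, Yp i ^ 2) ≤ CY * (w * ε) ^ (-mstar) / w := by
    have h0 := stmt15_sq d Yp (2 * SB * (w * ε) ^ (-mstar) / w) (by positivity) hYpk
    calc Real.sqrt (∑ i, Yp i ^ 2) ≤ Real.sqrt d * (2 * SB * (w * ε) ^ (-mstar) / w) := h0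
      _ = CY * (w * ε) ^ (-mstar) / w := by rw [hCYdef]; ring
  have htwb : tw Yw ≤ C₀ * (CY * (w * ε) ^ (-mstar)) ^ (1 + 2 / m) := by
    calc tw Yw ≤ C₀ * Real.sqrt (∑ i, Yw i ^ 2) ^ (1 + 2 / m) := htwgrowth Yw
      _ ≤ C₀ * (CY * (w * ε) ^ (-mstar)) ^ (1 + 2 / m) :=
        mul_le_mul_of_nonneg_left
          (Real.rpow_le_rpow (Real.sqrt_nonneg _) hNw (by positivity)) hC₀.le
  have hGb : |G| ≤ (CY * (w * ε) ^ (-mstar) / w) * (C₀ * (CY * (w * ε) ^ (-mstar)) ^ (2 / m)) := by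
    have hdec : G = ∑ i, Yp i * (fderiv ℝ tw Yw) (Pi.single i 1) := by
      rw [hG]; exact stmt15_fd d (fderiv ℝ tw Yw) Yp
    have hL : Real.sqrt (∑ i, ((fderiv ℝ tw Yw) (Pi.single i 1)) ^ 2)
        ≤ C₀ * (CY * (w * ε) ^ (-mstar)) ^ (2 / m) :=
      le_trans (htwgrad Yw)
        (mul_le_mul_of_nonneg_left
          (Real.rpow_le_rpow (Real.sqrt_nonneg _) hNw (by positivity)) hC₀.le)
    calc |G| = |∑ i, Yp i * (fderiv ℝ tw Yw) (Pi.single i 1)| := by rw [hdec]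
      _ ≤ Real.sqrt (∑ i, Yp i ^ 2)
          * Real.sqrt (∑ i, ((fderiv ℝ tw Yw) (Pi.single i 1)) ^ 2) :=
        stmt15_cs d Yp (fun i => (fderiv ℝ tw Yw) (Pi.single i 1))
      _ ≤ (CY * (w * ε) ^ (-mstar) / w) * (C₀ * (CY * (w * ε) ^ (-mstar)) ^ (2 / m)) :=
        mul_le_mul hNp hL (Real.sqrt_nonneg _) (by positivity)
  have hGw : |G * w| ≤ C₀ * (CY * (w * ε) ^ (-mstar)) ^ (2 / m) * (CY * (w * ε) ^ (-mstar)) := by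
    rw [abs_mul, abs_of_pos hw]
    calc |G| * w
        ≤ ((CY * (w * ε) ^ (-mstar) / w) * (C₀ * (CY * (w * ε) ^ (-mstar)) ^ (2 / m))) * w :=
          mul_le_mul_of_nonneg_right hGb hw.le
      _ = C₀ * (CY * (w * ε) ^ (-mstar)) ^ (2 / m) * (CY * (w * ε) ^ (-mstar)) := by
          field_simp
  -- rpow collapse identities
  have px1 : ((w * ε) ^ (-mstar)) ^ (1 + 2 / m) = (w * ε) ^ (-(mstar * (1 + 2 / m))) := by
    rw [← Real.rpow_mul hb.le]; congr 1; ring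
  have px2 : ((w * ε) ^ (-mstar)) ^ (2 / m) = (w * ε) ^ (-(mstar * (2 / m))) := by
    rw [← Real.rpow_mul hb.le]; congr 1; ring
  have k1 : (w * ε) ^ (4 * mstar) * (w * ε) ^ (-(mstar * (1 + 2 / m))) = (w * ε) ^ (1 / m) := by
    rw [← Real.rpow_add hb]; congr 1; rw [hmsval]; field_simp; ring
  have k2 : (w * ε) ^ (4 * mstar) * ((w * ε) ^ (-(mstar * (2 / m))) * (w * ε) ^ (-mstar))
      = (w * ε) ^ (1 / m) := by
    rw [← Real.rpow_add hb, ← Real.rpow_add hb]; congr 1; rw [hmsval]; field_simp; ring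
  have mr1 : (CY * (w * ε) ^ (-mstar)) ^ (1 + 2 / m)
      = CY ^ (1 + 2 / m) * ((w * ε) ^ (-mstar)) ^ (1 + 2 / m) :=
    Real.mul_rpow hCY.le hXnn
  have mr2 : (CY * (w * ε) ^ (-mstar)) ^ (2 / m)
      = CY ^ (2 / m) * ((w * ε) ^ (-mstar)) ^ (2 / m) :=
    Real.mul_rpow hCY.le hXnn
  -- bound on the error term EE
  have hEb : |lam * g t * (4 * mstar + (1 - R)) * ((w * ε) ^ (4 * mstar) * w ^ (-R)) * tw Yw
        + (w * ε) ^ (4 * mstar) * lam * g t * w ^ (-R) * (G * w)|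
      ≤ g t * w ^ (-R) * (w * ε) ^ (1 / m) * CE := by
    have hpre1 : (0:ℝ) ≤ lam * g t * (4 * mstar + (1 - R)) * ((w * ε) ^ (4 * mstar) * w ^ (-R)) := by
      have h1 : (0:ℝ) ≤ 4 * mstar + (1 - R) := by linarith
      positivity
    have hpre2 : (0:ℝ) ≤ (w * ε) ^ (4 * mstar) * lam * g t * w ^ (-R) := by positivity
    calc |lam * g t * (4 * mstar + (1 - R)) * ((w * ε) ^ (4 * mstar) * w ^ (-R)) * tw Yw
          + (w * ε) ^ (4 * mstar) * lam * g t * w ^ (-R) * (G * w)|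
        ≤ |lam * g t * (4 * mstar + (1 - R)) * ((w * ε) ^ (4 * mstar) * w ^ (-R)) * tw Yw|
          + |(w * ε) ^ (4 * mstar) * lam * g t * w ^ (-R) * (G * w)| := abs_add_le _ _
      _ ≤ lam * g t * (4 * mstar + (1 - R)) * ((w * ε) ^ (4 * mstar) * w ^ (-R))
            * (C₀ * (CY * (w * ε) ^ (-mstar)) ^ (1 + 2 / m))
          + (w * ε) ^ (4 * mstar) * lam * g t * w ^ (-R)
            * (C₀ * (CY * (w * ε) ^ (-mstar)) ^ (2 / m) * (CY * (w * ε) ^ (-mstar))) := by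
          apply add_le_add
          · rw [abs_mul, abs_of_nonneg hpre1]
            apply mul_le_mul_of_nonneg_left _ hpre1
            calc |tw Yw| = tw Yw := abs_of_nonneg (htwnn Yw)
              _ ≤ _ := htwb
          · rw [abs_mul, abs_of_nonneg hpre2]
            exact mul_le_mul_of_nonneg_left hGw hpre2
      _ = g t * w ^ (-R) * (w * ε) ^ (1 / m) * CE := by
          rw [hCEdef, mr1, mr2, px1, px2]
          linear_combination
            (lam * g t * (4 * mstar + (1 - R)) * w ^ (-R) * C₀ * CY ^ (1 + 2 / m)) * k1
            + (lam * g t * w ^ (-R) * C₀ * CY ^ (2 / m) * CY) * k2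
  -- identities used to normalize the derivative
  have iA : w ^ (1 - R - 1) = w ^ (-R) := by congr 1; ring
  have iB : (w * ε) ^ (2 * mstar - 1) = (w * ε) ^ (2 * mstar) / (w * ε) := by
    rw [Real.rpow_sub hb, Real.rpow_one]
  have iC : (w * ε) ^ (4 * mstar - 1) = (w * ε) ^ (4 * mstar) / (w * ε) := by
    rw [Real.rpow_sub hb, Real.rpow_one]
  have iD : (w * ε) ^ (2 * mstar) = w ^ (2 * mstar) * ε ^ (2 * mstar) :=
    Real.mul_rpow hw.le hε0.le
  have iE : w ^ (1 - R) = w ^ (-R) * w := by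
    rw [show (1 - R : ℝ) = -R + 1 by ring, Real.rpow_add_one hw.ne']
  have iF : w ^ (1 - R + 2 * mstar - 1) = w ^ (-R) * w ^ (2 * mstar) := by
    rw [← Real.rpow_add hw]; congr 1; ring
  -- the function ψ and its derivative, normalized
  have hψfun : (fun ω => ψ ε t ω s h) = (fun ω => g t * ω ^ (1 - R) / (1 - R)
      - (ω * ε) ^ (2 * mstar) * lam * ω ^ (1 - R) * gbar t
      - (ω * ε) ^ (4 * mstar) * lam * g t * ω ^ (1 - R) *
          tw (fun k => (ω * ε) ^ (-mstar) * S.mulVec (fun i => h i * s i / ω - piv i) k)) := rfl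
  have hufun : (fun ω => u t ω) = (fun ω : ℝ => lam * ω ^ (1 - R + 2 * mstar) * gbar t) := rfl
  have hU : HasDerivAt (fun ω : ℝ => lam * ω ^ (1 - R + 2 * mstar) * gbar t)
      (lam * ((1 - R + 2 * mstar) * w ^ (1 - R + 2 * mstar - 1)) * gbar t) w :=
    ((Real.hasDerivAt_rpow_const (Or.inl hw.ne')).const_mul lam).mul_const (gbar t)
  have hueq : deriv (fun ω => u t ω) w
      = lam * ((1 - R + 2 * mstar) * w ^ (1 - R + 2 * mstar - 1)) * gbar t := by
    rw [hufun]; exact hU.deriv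
  have hEq : deriv (fun ω => ψ ε t ω s h) w
      = g t * w ^ (-R)
        - ε ^ (2 * mstar) * (lam * ((1 - R + 2 * mstar) * w ^ (1 - R + 2 * mstar - 1)) * gbar t)
        - (lam * g t * (4 * mstar + (1 - R)) * ((w * ε) ^ (4 * mstar) * w ^ (-R)) * tw Yw
          + (w * ε) ^ (4 * mstar) * lam * g t * w ^ (-R) * (G * w)) := by
    rw [hψfun, hD.deriv, iB, iC, iD, iE, iF, iA]
    field_simp
    ring
  -- ratio computations
  have hq2eq : ε ^ (2 * mstar)
        * (lam * ((1 - R + 2 * mstar) * w ^ (1 - R + 2 * mstar - 1)) * gbar t)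
        / (g t * w ^ (-R))
      = lam * (1 - R + 2 * mstar) * (gbar t / g t) * (w * ε) ^ (2 * mstar) := by
    rw [iF, iD]
    field_simp
  have hr1 : (deriv (fun ω => ψ ε t ω s h) w + ε ^ (2 * mstar) * deriv (fun ω => u t ω) w)
        / (g t * w ^ (-R))
      = 1 - (lam * g t * (4 * mstar + (1 - R)) * ((w * ε) ^ (4 * mstar) * w ^ (-R)) * tw Yw
          + (w * ε) ^ (4 * mstar) * lam * g t * w ^ (-R) * (G * w)) / (g t * w ^ (-R)) := by
    rw [hEq, hueq]
    field_simp
    ring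
  have hr2 : deriv (fun ω => ψ ε t ω s h) w / (g t * w ^ (-R))
      = 1 - lam * (1 - R + 2 * mstar) * (gbar t / g t) * (w * ε) ^ (2 * mstar)
        - (lam * g t * (4 * mstar + (1 - R)) * ((w * ε) ^ (4 * mstar) * w ^ (-R)) * tw Yw
          + (w * ε) ^ (4 * mstar) * lam * g t * w ^ (-R) * (G * w)) / (g t * w ^ (-R)) := by
    rw [hEq, sub_div, sub_div, div_self hc.ne', hq2eq]
  -- final estimates
  have hEdiv : |(lam * g t * (4 * mstar + (1 - R)) * ((w * ε) ^ (4 * mstar) * w ^ (-R)) * tw Yw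
        + (w * ε) ^ (4 * mstar) * lam * g t * w ^ (-R) * (G * w)) / (g t * w ^ (-R))|
      ≤ (w * ε) ^ (1 / m) * CE := by
    rw [abs_div, abs_of_pos hc, div_le_iff₀ hc]
    calc _ ≤ g t * w ^ (-R) * (w * ε) ^ (1 / m) * CE := hEb
      _ = (w * ε) ^ (1 / m) * CE * (g t * w ^ (-R)) := by ring
  obtain ⟨hE1', hE2'⟩ := abs_le.mp hEdiv
  have hq2nn : 0 ≤ lam * (1 - R + 2 * mstar) * (gbar t / g t) * (w * ε) ^ (2 * mstar) := by
    have h1 := hgbart.1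
    have h2 : (0:ℝ) ≤ 1 - R + 2 * mstar := by linarith
    have h3 : 0 ≤ gbar t / g t := div_nonneg h1 hgt0.le
    positivity
  have hq2le : lam * (1 - R + 2 * mstar) * (gbar t / g t) * (w * ε) ^ (2 * mstar)
      ≤ Kb * (w * ε) ^ (2 * mstar) := by
    have h2 : (0:ℝ) ≤ 1 - R + 2 * mstar := by linarith
    have hdle : gbar t / g t ≤ gbarplus / gminus := div_le_div₀ hgbp hgbart.2 hgminus hgt
    rw [hKbdef]
    calc lam * (1 - R + 2 * mstar) * (gbar t / g t) * (w * ε) ^ (2 * mstar)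
        = (lam * (1 - R + 2 * mstar) * (w * ε) ^ (2 * mstar)) * (gbar t / g t) := by ring
      _ ≤ (lam * (1 - R + 2 * mstar) * (w * ε) ^ (2 * mstar)) * (gbarplus / gminus) :=
          mul_le_mul_of_nonneg_left hdle (by positivity)
      _ = lam * (1 - R + 2 * mstar) * gbarplus / gminus * (w * ε) ^ (2 * mstar) := by ring
  have hb1m0 : (0:ℝ) ≤ (w * ε) ^ (1 / m) := Real.rpow_nonneg hb.le _
  have hb2m0 : (0:ℝ) ≤ (w * ε) ^ (2 * mstar) := Real.rpow_nonneg hb.le _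
  have hm1 : 0 ≤ Kb * (w * ε) ^ (1 / m) := mul_nonneg hKb hb1m0
  have hm2 : 0 ≤ CE * (w * ε) ^ (2 * mstar) := mul_nonneg hCE hb2m0
  have hm3 : 0 ≤ CE * (w * ε) ^ (1 / m) := mul_nonneg hCE hb1m0
  have hm4 : 0 ≤ Kb * (w * ε) ^ (2 * mstar) := mul_nonneg hKb hb2m0
  clear_value SB CY CE Kb Yw Yp G
  refine ⟨⟨?_, ?_⟩, ?_, ?_⟩
  · rw [hr1]; linarith
  · rw [hr1]; linarith
  · rw [hr2]
    calc 1 - (CE + Kb + 1) * ((w * ε) ^ (2 * mstar) + (w * ε) ^ (1 / m))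
        ≤ 1 - (Kb * (w * ε) ^ (2 * mstar) + (w * ε) ^ (1 / m) * CE) := by
          have expand : (CE + Kb + 1) * ((w * ε) ^ (2 * mstar) + (w * ε) ^ (1 / m))
              = CE * (w * ε) ^ (2 * mstar) + CE * (w * ε) ^ (1 / m)
                + Kb * (w * ε) ^ (2 * mstar) + Kb * (w * ε) ^ (1 / m)
                + (w * ε) ^ (2 * mstar) + (w * ε) ^ (1 / m) := by ring
          linarith only [expand, hm1, hm2, hm3, hm4, hb1m0, hb2m0]
      _ ≤ 1 - (lam * (1 - R + 2 * mstar) * (gbar t / g t) * (w * ε) ^ (2 * mstar)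
            + (lam * g t * (4 * mstar + (1 - R)) * ((w * ε) ^ (4 * mstar) * w ^ (-R)) * tw Yw
              + (w * ε) ^ (4 * mstar) * lam * g t * w ^ (-R) * (G * w)) / (g t * w ^ (-R))) :=
          sub_le_sub_left (add_le_add hq2le hE2') 1
      _ = _ := (sub_sub 1 _ _).symm
  · rw [hr2]
    calc 1 - lam * (1 - R + 2 * mstar) * (gbar t / g t) * (w * ε) ^ (2 * mstar)
          - (lam * g t * (4 * mstar + (1 - R)) * ((w * ε) ^ (4 * mstar) * w ^ (-R)) * tw Yw
            + (w * ε) ^ (4 * mstar) * lam * g t * w ^ (-R) * (G * w)) / (g t * w ^ (-R))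
        = 1 - (lam * (1 - R + 2 * mstar) * (gbar t / g t) * (w * ε) ^ (2 * mstar)
            + (lam * g t * (4 * mstar + (1 - R)) * ((w * ε) ^ (4 * mstar) * w ^ (-R)) * tw Yw
              + (w * ε) ^ (4 * mstar) * lam * g t * w ^ (-R) * (G * w)) / (g t * w ^ (-R))) :=
          sub_sub 1 _ _
      _ ≤ 1 - (0 + -((w * ε) ^ (1 / m) * CE)) :=
          sub_le_sub_left (add_le_add hq2nn hE1') 1
      _ ≤ 1 + (CE + Kb + 1) * ((w * ε) ^ (2 * mstar) + (w * ε) ^ (1 / m)) := by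
          have expand : (CE + Kb + 1) * ((w * ε) ^ (2 * mstar) + (w * ε) ^ (1 / m))
              = CE * (w * ε) ^ (2 * mstar) + CE * (w * ε) ^ (1 / m)
                + Kb * (w * ε) ^ (2 * mstar) + Kb * (w * ε) ^ (1 / m)
                + (w * ε) ^ (2 * mstar) + (w * ε) ^ (1 / m) := by ring
          linarith only [expand, hm1, hm2, hm3, hm4, hb1m0, hb2m0]
end
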